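/- arXiv:1712.08481 — 8 statements merged into one kernel-verified Lean document; each statement's English description precedes it below -/
import Mathlib

section
/- If a random variable a has density πx·erfc(√π·x/2) on (0,∞), then E[a] = 8/(3π) and E[a²] = 3/π. -/
open Real MeasureTheory

open Set Filter

lemma expInt : Integrable (fun s : ℝ => Real.exp (-s ^ 2)) := by
  have := integrable_exp_neg_mul_sq (b := 1) one_pos
  simpa using this

lemma hasDerivAt_tail (t : ℝ) :
    HasDerivAt (fun t : ℝ => ∫ s in Set.Ioi t, Real.exp (-s ^ 2)) (-Real.exp (-t ^ 2)) t := by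
  have hcont : Continuous fun s : ℝ => Real.exp (-s ^ 2) := by continuity
  have key : ∀ u : ℝ, (∫ s in Set.Ioi u, Real.exp (-s ^ 2))
      = (∫ s : ℝ, Real.exp (-s ^ 2)) - (∫ s in Set.Iic (0:ℝ), Real.exp (-s^2))
        - ∫ s in (0:ℝ)..u, Real.exp (-s ^ 2) := by
    intro u
    have h1 := intervalIntegral.integral_Iic_add_Ioi (b := u) expInt.integrableOn expInt.integrableOn
    have h2 := intervalIntegral.integral_Iic_sub_Iic (f := fun s : ℝ => Real.exp (-s^2))
      (μ := volume) (a := 0) (b := u) expInt.integrableOn expInt.integrableOn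
    linarith
  have hD : HasDerivAt (fun u : ℝ => ∫ s in (0:ℝ)..u, Real.exp (-s ^ 2)) (Real.exp (-t ^ 2)) t :=
    intervalIntegral.integral_hasDerivAt_right expInt.intervalIntegrable
      hcont.aestronglyMeasurable.stronglyMeasurableAtFilter hcont.continuousAt
  have := ((hasDerivAt_const t ((∫ s : ℝ, Real.exp (-s ^ 2))
      - ∫ s in Set.Iic (0:ℝ), Real.exp (-s^2))).sub hD)
  rw [show (fun t : ℝ => ∫ s in Set.Ioi t, Real.exp (-s ^ 2)) = _ from funext key]
  exact this.congr_deriv (by ring)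

/-- The complementary error function. -/
noncomputable def erfc (t : ℝ) : ℝ := (2 / Real.sqrt π) * ∫ s in Set.Ioi t, Real.exp (-s ^ 2)

lemma erfc_hasDerivAt (t : ℝ) :
    HasDerivAt erfc (-(2 / Real.sqrt π * Real.exp (-t ^ 2))) t := by
  have := (hasDerivAt_tail t).const_mul (2 / Real.sqrt π)
  exact this.congr_deriv (by ring)

lemma erfc_zero : erfc 0 = 1 := by
  have h : (∫ s in Set.Ioi (0:ℝ), Real.exp (-s ^ 2)) = Real.sqrt π / 2 := by
    have := integral_gaussian_Ioi 1
    simpa using this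
  rw [erfc, h]
  rw [div_mul_div_comm]
  rw [div_eq_one_iff_eq (by positivity)]
  ring

lemma erfc_nonneg (t : ℝ) : 0 ≤ erfc t := by
  apply mul_nonneg (by positivity)
  apply setIntegral_nonneg measurableSet_Ioi
  intro x _; positivity

-- erfc t ≤ (2/√π) * exp(-t^2)/2 for t ≥ 1
lemma erfc_le (t : ℝ) (ht : 1 ≤ t) : erfc t ≤ (2 / Real.sqrt π) * (Real.exp (-t ^ 2) / 2) := by
  have hd : ∀ x ∈ Set.Ioi t, HasDerivAt (fun s : ℝ => -Real.exp (-s^2)/2)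
      (x * Real.exp (-x ^ 2)) x := by
    intro x _
    have : HasDerivAt (fun s : ℝ => -s^2) (-(2*x)) x := by
      exact (hasDerivAt_pow 2 x).neg.congr_deriv (by norm_num)
    have := ((this.exp).neg.div_const 2)
    exact this.congr_deriv (by ring)
  have hpos : ∀ x ∈ Set.Ioi t, 0 ≤ x * Real.exp (-x ^ 2) := by
    intro x hx
    have : (0:ℝ) < x := lt_of_lt_of_le one_pos (le_of_lt (lt_of_le_of_lt ht hx))
    positivity
  have htend : Tendsto (fun s : ℝ => -Real.exp (-s^2)/2) atTop (nhds 0) := by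
    have h1 : Tendsto (fun s : ℝ => -s^2) atTop atBot := by
      apply tendsto_neg_atBot_iff.mpr
      exact tendsto_pow_atTop (by norm_num)
    have := (Real.tendsto_exp_atBot.comp h1).neg.div_const 2
    simpa using this
  have hc : ContinuousWithinAt (fun s : ℝ => -Real.exp (-s^2)/2) (Set.Ici t) t := by
    apply Continuous.continuousWithinAt; continuity
  have hIntOn : IntegrableOn (fun s : ℝ => s * Real.exp (-s ^ 2)) (Set.Ioi t) :=
    integrableOn_Ioi_deriv_of_nonneg hc hd hpos htend
  have hint : (∫ s in Set.Ioi t, s * Real.exp (-s ^ 2)) = Real.exp (-t^2)/2 := by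
    rw [integral_Ioi_of_hasDerivAt_of_nonneg hc hd hpos htend]; ring
  have hmono : (∫ s in Set.Ioi t, Real.exp (-s ^ 2)) ≤ ∫ s in Set.Ioi t, s * Real.exp (-s ^ 2) := by
    apply setIntegral_mono_on expInt.integrableOn hIntOn measurableSet_Ioi
    · intro x hx
      have hx1 : (1:ℝ) ≤ x := le_of_lt (lt_of_le_of_lt ht hx)
      nlinarith [Real.exp_pos (-x^2)]
  calc erfc t ≤ (2 / Real.sqrt π) * ∫ s in Set.Ioi t, s * Real.exp (-s ^ 2) := by
        apply mul_le_mul_of_nonneg_left hmono (by positivity)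
    _ = (2 / Real.sqrt π) * (Real.exp (-t ^ 2) / 2) := by rw [hint]

lemma tendsto_gauss (k : ℕ) :
    Tendsto (fun x : ℝ => x ^ k * Real.exp (-(π/4) * x ^ 2)) atTop (nhds 0) := by
  have h := (tendsto_rpow_abs_mul_exp_neg_mul_sq_cocompact (a := π/4)
    (by positivity) (k : ℝ)).mono_left _root_.atTop_le_cocompact
  apply h.congr'
  filter_upwards [eventually_ge_atTop (0:ℝ)] with x hx
  rw [abs_of_nonneg hx, Real.rpow_natCast]

lemma tendsto_polyerfc (k : ℕ) :
    Tendsto (fun x : ℝ => x ^ k * erfc (Real.sqrt π * x / 2)) atTop (nhds 0) := by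
  have hsq : ∀ x : ℝ, (Real.sqrt π * x / 2) ^ 2 = (π/4) * x ^ 2 := by
    intro x
    rw [div_pow, mul_pow, sq_sqrt pi_pos.le]
    ring
  have hg : Tendsto (fun x : ℝ => (1 / Real.sqrt π) * (x ^ k * Real.exp (-(π/4) * x ^ 2)))
      atTop (nhds 0) := by
    simpa using (tendsto_gauss k).const_mul (1 / Real.sqrt π)
  apply squeeze_zero' ?_ ?_ hg
  · filter_upwards [eventually_ge_atTop (0:ℝ)] with x hx
    exact mul_nonneg (pow_nonneg hx k) (erfc_nonneg _)
  · filter_upwards [eventually_ge_atTop (2 / Real.sqrt π)] with x hx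
    have hx0 : (0:ℝ) ≤ x := le_trans (by positivity) hx
    have h1 : (1:ℝ) ≤ Real.sqrt π * x / 2 := by
      rw [div_le_iff₀ (by positivity)] at hx
      rw [le_div_iff₀ (by norm_num : (0:ℝ) < 2)]
      nlinarith [Real.sqrt_pos.mpr pi_pos]
    have := erfc_le _ h1
    calc x ^ k * erfc (Real.sqrt π * x / 2)
        ≤ x ^ k * ((2 / Real.sqrt π) * (Real.exp (-(Real.sqrt π * x / 2) ^ 2) / 2)) :=
          mul_le_mul_of_nonneg_left this (pow_nonneg hx0 k)
      _ = (1 / Real.sqrt π) * (x ^ k * Real.exp (-(π/4) * x ^ 2)) := by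
          rw [hsq]; ring

lemma hE (x : ℝ) : HasDerivAt (fun x : ℝ => erfc (Real.sqrt π * x / 2))
    (-Real.exp (-(π/4) * x ^ 2)) x := by
  have hlin : HasDerivAt (fun x : ℝ => Real.sqrt π * x / 2) (Real.sqrt π / 2) x := by
    simpa using ((hasDerivAt_id x).const_mul (Real.sqrt π)).div_const 2
  have := (erfc_hasDerivAt (Real.sqrt π * x / 2)).comp x hlin
  refine this.congr_deriv ?_
  have hsq : (Real.sqrt π * x / 2) ^ 2 = (π/4) * x ^ 2 := by
    rw [div_pow, mul_pow, sq_sqrt pi_pos.le]; ring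
  rw [hsq]
  have hπ : Real.sqrt π ≠ 0 := by positivity
  field_simp

lemma hG (x : ℝ) : HasDerivAt (fun x : ℝ => Real.exp (-(π/4) * x ^ 2))
    (Real.exp (-(π/4) * x ^ 2) * (-(π/4) * (2 * x))) x := by
  have h : HasDerivAt (fun x : ℝ => -(π/4) * x ^ 2) (-(π/4) * (2 * x)) x := by
    simpa using (hasDerivAt_pow 2 x).const_mul (-(π/4))
  exact h.exp

noncomputable def F₁ (x : ℝ) : ℝ :=
  π * ((x ^ 3 * erfc (Real.sqrt π * x / 2)) / 3 -
    ((2/π) * (x ^ 2 * Real.exp (-(π/4) * x ^ 2)) + (8/π^2) * Real.exp (-(π/4) * x ^ 2)) / 3)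

noncomputable def F₂ (x : ℝ) : ℝ :=
  π * ((x ^ 4 * erfc (Real.sqrt π * x / 2)) / 4 +
    (((-(2/π)) * (x ^ 3 * Real.exp (-(π/4) * x ^ 2)) - (12/π^2) * (x * Real.exp (-(π/4) * x ^ 2)))
      - (12/π^2) * erfc (Real.sqrt π * x / 2)) / 4)

lemma F₁_hasDerivAt (x : ℝ) :
    HasDerivAt F₁ (x * (π * x * erfc (Real.sqrt π * x / 2))) x := by
  have A := ((hasDerivAt_pow 3 x).mul (hE x)).div_const 3
  have B := ((hasDerivAt_pow 2 x).mul (hG x)).const_mul (2/π)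
  have C := (hG x).const_mul (8/π^2)
  have total := (A.sub ((B.add C).div_const 3)).const_mul π
  refine total.congr_deriv ?_
  have hπ : π ≠ 0 := pi_ne_zero
  field_simp
  ring

lemma F₂_hasDerivAt (x : ℝ) :
    HasDerivAt F₂ (x ^ 2 * (π * x * erfc (Real.sqrt π * x / 2))) x := by
  have A := ((hasDerivAt_pow 4 x).mul (hE x)).div_const 4
  have B := ((hasDerivAt_pow 3 x).mul (hG x)).const_mul (-(2/π))
  have C := (((hasDerivAt_id x).mul (hG x)).const_mul (12/π^2))
  have D := (hE x).const_mul (12/π^2)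
  have total := (A.add (((B.sub C).sub D).div_const 4)).const_mul π
  refine total.congr_deriv ?_
  have hπ : π ≠ 0 := pi_ne_zero
  simp only [id]
  field_simp
  ring

theorem pinned_a_moments :
    (∫ x in Set.Ioi (0:ℝ), x * (π * x * erfc (Real.sqrt π * x / 2))) = 8 / (3 * π) ∧
    (∫ x in Set.Ioi (0:ℝ), x ^ 2 * (π * x * erfc (Real.sqrt π * x / 2))) = 3 / π := by
  have hπ : π ≠ 0 := pi_ne_zero
  have herfc0 : Tendsto (fun x : ℝ => erfc (Real.sqrt π * x / 2)) atTop (nhds 0) := by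
    have := tendsto_polyerfc 0
    simpa using this
  constructor
  · have hpos : ∀ x ∈ Set.Ioi (0:ℝ), 0 ≤ x * (π * x * erfc (Real.sqrt π * x / 2)) := by
      intro x hx
      have hx0 : (0:ℝ) ≤ x := le_of_lt hx
      have := erfc_nonneg (Real.sqrt π * x / 2)
      positivity
    have htend : Tendsto F₁ atTop (nhds 0) := by
      have h3 := tendsto_polyerfc 3
      have h2 := tendsto_gauss 2
      have h0 := tendsto_gauss 0
      simp only [pow_zero, one_mul] at h0
      have := ((h3.div_const 3).sub
        (((h2.const_mul (2/π)).add (h0.const_mul (8/π^2))).div_const 3)).const_mul π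
      norm_num at this
      refine this.congr fun y => ?_
      unfold F₁
      norm_num [neg_mul]
    have key := integral_Ioi_of_hasDerivAt_of_nonneg
      (F₁_hasDerivAt 0).continuousAt.continuousWithinAt
      (fun x _ => F₁_hasDerivAt x) hpos htend
    rw [key]
    simp only [F₁]
    norm_num [erfc_zero]
    field_simp
  · have hpos : ∀ x ∈ Set.Ioi (0:ℝ), 0 ≤ x ^ 2 * (π * x * erfc (Real.sqrt π * x / 2)) := by
      intro x hx
      have hx0 : (0:ℝ) ≤ x := le_of_lt hx
      have := erfc_nonneg (Real.sqrt π * x / 2)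
      positivity
    have htend : Tendsto F₂ atTop (nhds 0) := by
      have h4 := tendsto_polyerfc 4
      have h3 := tendsto_gauss 3
      have h1 := tendsto_gauss 1
      simp only [pow_one] at h1
      have := ((h4.div_const 4).add
        ((((h3.const_mul (-(2/π))).sub (h1.const_mul (12/π^2))).sub
          (herfc0.const_mul (12/π^2))).div_const 4)).const_mul π
      norm_num at this
      refine this.congr fun y => ?_
      unfold F₂
      norm_num [neg_mul]
    have key := integral_Ioi_of_hasDerivAt_of_nonneg
      (F₂_hasDerivAt 0).continuousAt.continuousWithinAt
      (fun x _ => F₂_hasDerivAt x) hpos htend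
    rw [key]
    simp only [F₂]
    norm_num [erfc_zero]
    field_simp
    ring
end

section
/- The function g(x,y) = (2/π)·sin(x)·sin(x+y)/sin(y)³ on the region {(x,y) : 0 < x < π, (π−x)/2 < y < π−x} integrates to 1, i.e., ∫₀^π ∫_{(π−x)/2}^{π−x} (2/π)·sin(x)·sin(x+y)/sin(y)³ dy dx = 1. -/
open Real MeasureTheory

lemma inner_integral_eq (x : ℝ) (hx1 : 0 < x) (hx2 : x < π) :
    ∫ y in Set.Ioo ((π - x) / 2) (π - x),
      (2 / π) * Real.sin x * Real.sin (x + y) / Real.sin y ^ 3 = 1 / π := by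
  set a := (π - x) / 2 with ha
  set b := π - x with hb
  have hab : a < b := by
    simp only [ha, hb]; linarith
  have ha0 : 0 < a := by simp only [ha]; linarith
  have hbπ : b < π := by simp only [hb]; linarith
  -- rewrite as interval integral
  rw [← MeasureTheory.integral_Ioc_eq_integral_Ioo,
    ← intervalIntegral.integral_of_le hab.le]
  set F : ℝ → ℝ := fun y =>
    (2 / π) * Real.sin x *
      (-(Real.sin x) / (2 * Real.sin y ^ 2) - Real.cos x * (Real.cos y / Real.sin y)) with hF
  have hsin_pos : ∀ y ∈ Set.uIcc a b, 0 < Real.sin y := by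
    intro y hy
    rw [Set.uIcc_of_le hab.le] at hy
    exact Real.sin_pos_of_pos_of_lt_pi (lt_of_lt_of_le ha0 hy.1)
      (lt_of_le_of_lt hy.2 hbπ)
  have hderiv : ∀ y ∈ Set.uIcc a b,
      HasDerivAt F ((2 / π) * Real.sin x * Real.sin (x + y) / Real.sin y ^ 3) y := by
    intro y hy
    have hs : Real.sin y ≠ 0 := (hsin_pos y hy).ne'
    have h1 : HasDerivAt (fun y => Real.sin y) (Real.cos y) y := Real.hasDerivAt_sin y
    have h2 : HasDerivAt (fun y => Real.cos y) (-Real.sin y) y := Real.hasDerivAt_cos y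
    have hsq : HasDerivAt (fun y => 2 * Real.sin y ^ 2)
        (2 * (2 * Real.sin y ^ 1 * Real.cos y)) y := (h1.pow 2).const_mul 2
    have hdiv1 : HasDerivAt (fun y => -(Real.sin x) / (2 * Real.sin y ^ 2))
        ((0 * (2 * Real.sin y ^ 2) - (-(Real.sin x)) * (2 * (2 * Real.sin y ^ 1 * Real.cos y)))
          / (2 * Real.sin y ^ 2) ^ 2) y :=
      (hasDerivAt_const y (-(Real.sin x))).div hsq (by positivity)
    have hcot : HasDerivAt (fun y => Real.cos y / Real.sin y)
        (((-Real.sin y) * Real.sin y - Real.cos y * Real.cos y) / Real.sin y ^ 2) y :=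
      h2.div h1 hs
    have hcomb := ((hdiv1.sub (hcot.const_mul (Real.cos x))).const_mul
      ((2 / π) * Real.sin x))
    convert hcomb using 1
    · rfl
    · rfl
    · rfl
    rw [Real.sin_add]
    have hpyth := Real.sin_sq_add_cos_sq y
    field_simp
    linear_combination (-2*Real.sin x*Real.cos x*Real.sin y) * hpyth
  have hint : IntervalIntegrable
      (fun y => (2 / π) * Real.sin x * Real.sin (x + y) / Real.sin y ^ 3)
      volume a b := by
    apply ContinuousOn.intervalIntegrable
    apply ContinuousOn.div
    · fun_prop
    · fun_prop
    · intro y hy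
      exact pow_ne_zero 3 (hsin_pos y hy).ne'
  rw [intervalIntegral.integral_eq_sub_of_hasDerivAt hderiv hint]
  -- evaluate
  have hsb : Real.sin b = Real.sin x := by rw [hb, Real.sin_pi_sub]
  have hcb : Real.cos b = -Real.cos x := by rw [hb, Real.cos_pi_sub]
  have haeq : a = π / 2 - x / 2 := by rw [ha]; ring
  have hsa : Real.sin a = Real.cos (x / 2) := by rw [haeq, Real.sin_pi_div_two_sub]
  have hca : Real.cos a = Real.sin (x / 2) := by rw [haeq, Real.cos_pi_div_two_sub]
  have hsx : Real.sin x ≠ 0 :=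
    (Real.sin_pos_of_pos_of_lt_pi hx1 hx2).ne'
  have hch : Real.cos (x / 2) ≠ 0 := by
    apply ne_of_gt
    apply Real.cos_pos_of_mem_Ioo
    constructor <;> [linarith [Real.pi_pos]; linarith]
  have hs2 : Real.sin x = 2 * Real.sin (x / 2) * Real.cos (x / 2) := by
    rw [← Real.sin_two_mul]; ring_nf
  have hc2 : Real.cos x = 2 * Real.cos (x / 2) ^ 2 - 1 := by
    rw [← Real.cos_two_mul]; ring_nf
  simp only [hF, hsb, hcb, hsa, hca]
  rw [hs2, hc2]
  have hpy := Real.sin_sq_add_cos_sq (x / 2)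
  have hπ : (π : ℝ) ≠ 0 := Real.pi_ne_zero
  have hsh : Real.sin (x / 2) ≠ 0 := by
    apply ne_of_gt
    apply Real.sin_pos_of_pos_of_lt_pi <;> linarith [Real.pi_pos]
  field_simp
  linear_combination (8*Real.cos (x/2)^2) * hpy

theorem pinned_angle_joint_density :
    ∫ x in Set.Ioo (0:ℝ) π, ∫ y in Set.Ioo ((π - x) / 2) (π - x),
      (2 / π) * Real.sin x * Real.sin (x + y) / Real.sin y ^ 3 = 1 := by
  rw [MeasureTheory.setIntegral_congr_fun (by exact measurableSet_Ioo)
    (fun x hx => inner_integral_eq x hx.1 hx.2)]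
  rw [MeasureTheory.setIntegral_const]
  simp [Real.volume_Ioo, ENNReal.toReal_ofReal Real.pi_pos.le]
  field_simp
  exact max_eq_left Real.pi_pos.le
end

section
/- With joint density g(x,y) = (2/π)·sin(x)·sin(x+y)/sin(y)³ on {0 < x < π, (π−x)/2 < y < π−x}, the marginal in x is uniform: for each 0 < x < π, ∫_{(π−x)/2}^{π−x} (2/π)·sin(x)·sin(x+y)/sin(y)³ dy = 1/π. -/
open Real MeasureTheory

theorem pinned_alpha_uniform (x : ℝ) (hx0 : 0 < x) (hxπ : x < π) :
    ∫ y in Set.Ioo ((π - x) / 2) (π - x),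
      (2 / π) * Real.sin x * Real.sin (x + y) / Real.sin y ^ 3 = 1 / π := by
  set a := (π - x) / 2 with ha
  set b := π - x with hb
  have ha0 : 0 < a := by simp [ha]; linarith
  have hab : a < b := by simp [ha, hb]; linarith
  have hbπ : b < π := by simp [hb]; linarith
  have hsin : ∀ y ∈ Set.Icc a b, Real.sin y ≠ 0 := by
    intro y hy
    exact ne_of_gt (Real.sin_pos_of_pos_of_lt_pi (lt_of_lt_of_le ha0 hy.1)
      (lt_of_le_of_lt hy.2 hbπ))
  set F : ℝ → ℝ := fun y =>
    (2 / π) * Real.sin x * (-(Real.sin x) / (2 * Real.sin y ^ 2)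
      - Real.cos x * Real.cos y / Real.sin y) with hF
  have hderiv : ∀ y ∈ Set.Icc a b,
      HasDerivAt F ((2 / π) * Real.sin x * Real.sin (x + y) / Real.sin y ^ 3) y := by
    intro y hy
    have hs := hsin y hy
    have h1 : HasDerivAt (fun y => Real.sin y ^ 2) (2 * Real.sin y * Real.cos y) y := by
      have := (Real.hasDerivAt_sin y).pow 2
      refine this.congr_deriv ?_; ring
    have h2 : HasDerivAt (fun y => -(Real.sin x) / (2 * Real.sin y ^ 2))
        (Real.sin x * Real.cos y / Real.sin y ^ 3) y := by
      have := ((hasDerivAt_const y (-(Real.sin x))).div (h1.const_mul 2)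
        (by positivity))
      refine this.congr_deriv ?_
      field_simp
      ring
    have h3 : HasDerivAt (fun y => Real.cos x * Real.cos y / Real.sin y)
        (-(Real.cos x) / Real.sin y ^ 2) y := by
      have := (((Real.hasDerivAt_cos y).const_mul (Real.cos x)).div
        (Real.hasDerivAt_sin y) hs)
      refine this.congr_deriv ?_
      field_simp
      linear_combination (-Real.cos x) * (Real.sin_sq_add_cos_sq y)
    have := ((h2.sub h3).const_mul ((2 / π) * Real.sin x))
    refine this.congr_deriv ?_
    rw [Real.sin_add]
    field_simp
    ring
  have hcont : ContinuousOn
      (fun y => (2 / π) * Real.sin x * Real.sin (x + y) / Real.sin y ^ 3)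
      (Set.Icc a b) := by
    apply ContinuousOn.div
    · exact (continuousOn_const.mul (Real.continuous_sin.comp
        (continuous_const.add continuous_id)).continuousOn)
    · exact (Real.continuous_sin.continuousOn.pow 3)
    · intro y hy
      exact pow_ne_zero 3 (hsin y hy)
  have hicc : Set.uIcc a b = Set.Icc a b := Set.uIcc_of_le hab.le
  have key : ∫ y in a..b, (2 / π) * Real.sin x * Real.sin (x + y) / Real.sin y ^ 3
      = F b - F a := by
    apply intervalIntegral.integral_eq_sub_of_hasDerivAt
    · intro y hy; exact hderiv y (hicc ▸ hy)
    · exact (hcont.mono (by rw [hicc])).intervalIntegrable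
  have heq : (∫ y in Set.Ioo a b,
      (2 / π) * Real.sin x * Real.sin (x + y) / Real.sin y ^ 3)
      = ∫ y in a..b, (2 / π) * Real.sin x * Real.sin (x + y) / Real.sin y ^ 3 := by
    rw [intervalIntegral.integral_of_le hab.le, MeasureTheory.integral_Ioc_eq_integral_Ioo]
  rw [heq, key]
  -- now compute F b - F a
  have hsb : Real.sin b = Real.sin x := by rw [hb, Real.sin_pi_sub]
  have hcb : Real.cos b = -Real.cos x := by rw [hb, Real.cos_pi_sub]
  have ha' : a = π / 2 - x / 2 := by rw [ha]; ring
  have hsa : Real.sin a = Real.cos (x / 2) := by rw [ha', Real.sin_pi_div_two_sub]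
  have hca : Real.cos a = Real.sin (x / 2) := by rw [ha', Real.cos_pi_div_two_sub]
  have hsx : Real.sin x = 2 * Real.sin (x / 2) * Real.cos (x / 2) := by
    rw [← Real.sin_two_mul]; ring_nf
  have hcx : Real.cos x = 1 - 2 * Real.sin (x / 2) ^ 2 := by
    have h := Real.cos_two_mul (x / 2)
    have h2 : 2 * (x / 2) = x := by ring
    rw [h2] at h
    nlinarith [Real.sin_sq_add_cos_sq (x / 2)]
  have hs2 : Real.sin (x / 2) > 0 :=
    Real.sin_pos_of_pos_of_lt_pi (by linarith) (by linarith [Real.pi_pos])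
  have hc2 : Real.cos (x / 2) > 0 := by
    have := hsin a (Set.left_mem_Icc.2 hab.le)
    rw [hsa] at this
    rcases lt_or_gt_of_ne this with h | h
    · exfalso
      have : Real.cos (x / 2) ≥ 0 := Real.cos_nonneg_of_mem_Icc
        ⟨by linarith [Real.pi_pos], by linarith⟩
      linarith
    · exact h
  have hpyth : Real.sin (x / 2) ^ 2 + Real.cos (x / 2) ^ 2 = 1 :=
    Real.sin_sq_add_cos_sq (x / 2)
  have hπ : π ≠ 0 := ne_of_gt Real.pi_pos
  rw [hF]
  simp only [hsb, hcb, hsa, hca, hsx, hcx]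
  field_simp
  ring_nf
end

section
/- The function h(x) = (4/π)·cos(x)² for 0 < x < π/2 (and 0 for π/2 < x < π) is a probability density, and its mean is π/4 − 1/π and mean square is −1/2 + π²/12. -/
open Real MeasureTheory

private lemma h2x (x : ℝ) : HasDerivAt (fun x : ℝ => 2*x) 2 x := by
  simpa using (hasDerivAt_id x).const_mul 2

private lemma hsin (x : ℝ) : HasDerivAt (fun x => Real.sin (2*x)) (Real.cos (2*x) * 2) x :=
  (Real.hasDerivAt_sin (2*x)).comp x (h2x x)

private lemma hcos (x : ℝ) : HasDerivAt (fun x => Real.cos (2*x)) (-Real.sin (2*x) * 2) x :=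
  (Real.hasDerivAt_cos (2*x)).comp x (h2x x)

private lemma aux1 : (∫ x in (0:ℝ)..(π/2), (4/π) * Real.cos x ^ 2) = 1 := by
  have h : ∀ x ∈ Set.uIcc (0:ℝ) (π/2),
      HasDerivAt (fun x => (4/π) * (x/2 + Real.sin (2*x)/4)) ((4/π) * Real.cos x ^ 2) x := by
    intro x _
    have := (((hasDerivAt_id x).div_const 2).add ((hsin x).div_const 4)).const_mul (4/π)
    refine this.congr_deriv ?_
    rw [Real.cos_two_mul]; try simp only [id_eq]
    ring
  rw [intervalIntegral.integral_eq_sub_of_hasDerivAt h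
    (by apply Continuous.intervalIntegrable; continuity)]
  simp [Real.sin_pi]
  field_simp
  simp only [Real.sin_pi]
  ring

private lemma aux2 : (∫ x in (0:ℝ)..(π/2), x * ((4/π) * Real.cos x ^ 2)) = π/4 - 1/π := by
  have h : ∀ x ∈ Set.uIcc (0:ℝ) (π/2),
      HasDerivAt (fun x => (4/π) * (x^2/4 + x * Real.sin (2*x)/4 + Real.cos (2*x)/8))
        (x * ((4/π) * Real.cos x ^ 2)) x := by
    intro x _
    have h1 : HasDerivAt (fun x : ℝ => x^2) (2*x) x := by simpa using hasDerivAt_pow 2 x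
    have := (((h1.div_const 4).add
      (((hasDerivAt_id x).mul (hsin x)).div_const 4)).add ((hcos x).div_const 8)).const_mul (4/π)
    refine this.congr_deriv ?_
    rw [Real.cos_two_mul]; try simp only [id_eq]
    ring
  rw [intervalIntegral.integral_eq_sub_of_hasDerivAt h
    (by apply Continuous.intervalIntegrable; continuity)]
  simp [Real.sin_pi, Real.cos_pi]
  field_simp
  simp only [Real.sin_pi, Real.cos_pi]
  ring

private lemma aux3 : (∫ x in (0:ℝ)..(π/2), x^2 * ((4/π) * Real.cos x ^ 2)) = -1/2 + π^2/12 := by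
  have h : ∀ x ∈ Set.uIcc (0:ℝ) (π/2),
      HasDerivAt (fun x => (4/π) * (x^3/6 + x^2 * Real.sin (2*x)/4 + x * Real.cos (2*x)/4
        - Real.sin (2*x)/8)) (x^2 * ((4/π) * Real.cos x ^ 2)) x := by
    intro x _
    have h3 : HasDerivAt (fun x : ℝ => x^3) (3*x^2) x := by simpa using hasDerivAt_pow 3 x
    have h1 : HasDerivAt (fun x : ℝ => x^2) (2*x) x := by simpa using hasDerivAt_pow 2 x
    have := ((((h3.div_const 6).add ((h1.mul (hsin x)).div_const 4)).add
      (((hasDerivAt_id x).mul (hcos x)).div_const 4)).sub ((hsin x).div_const 8)).const_mul (4/π)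
    refine this.congr_deriv ?_
    rw [Real.cos_two_mul]; try simp only [id_eq]
    ring
  rw [intervalIntegral.integral_eq_sub_of_hasDerivAt h
    (by apply Continuous.intervalIntegrable; continuity)]
  simp [Real.sin_pi, Real.cos_pi]
  field_simp
  simp only [Real.sin_pi, Real.cos_pi]
  ring

private lemma ioo_eq (f : ℝ → ℝ) :
    (∫ x in Set.Ioo (0:ℝ) (π/2), f x) = ∫ x in (0:ℝ)..(π/2), f x := by
  rw [intervalIntegral.integral_of_le (by positivity), MeasureTheory.integral_Ioc_eq_integral_Ioo]

theorem pinned_gamma_density_and_moments :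
    (∫ x in Set.Ioo (0:ℝ) (π / 2), (4 / π) * Real.cos x ^ 2) = 1 ∧
    (∫ x in Set.Ioo (0:ℝ) (π / 2), x * ((4 / π) * Real.cos x ^ 2)) = π / 4 - 1 / π ∧
    (∫ x in Set.Ioo (0:ℝ) (π / 2), x ^ 2 * ((4 / π) * Real.cos x ^ 2)) = -1 / 2 + π ^ 2 / 12 := by
  refine ⟨?_, ?_, ?_⟩
  · rw [ioo_eq]; exact aux1
  · rw [ioo_eq]; exact aux2
  · rw [ioo_eq]; exact aux3
end

section
/- If γ has density (4/π)·cos(x)² on (0, π/2), then P(γ > π/2) = 0; combined with P(α > π/2) = 1/2 for α Uniform[0,π] and P(β > π/2) = 1/4 for β with density (1/sin(x)² + (π−x)cos(x)/sin(x)³)/π on (π/2, π), the probability that a pinned Poissonian triangle is obtuse equals 3/4. -/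
open Real MeasureTheory

noncomputable def Fa (x : ℝ) : ℝ := ((x - π) - Real.sin x * Real.cos x) / (2 * Real.sin x ^ 2)

noncomputable def fp (x : ℝ) : ℝ := 1 / Real.sin x ^ 2 + (π - x) * Real.cos x / Real.sin x ^ 3

lemma fp_deriv {x : ℝ} (hx : x ∈ Set.Ioo (π/2) π) : HasDerivAt Fa (fp x) x := by
  have hs : 0 < Real.sin x := Real.sin_pos_of_pos_of_lt_pi (lt_trans (by positivity) hx.1) hx.2
  have hd : (2 * Real.sin x ^ 2) ≠ 0 := by positivity
  have hN : HasDerivAt (fun x => (x - π) - Real.sin x * Real.cos x)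
      (1 - ((Real.cos x * Real.cos x) + Real.sin x * (-Real.sin x))) x := by
    exact ((hasDerivAt_id x).sub_const π).sub ((Real.hasDerivAt_sin x).mul (Real.hasDerivAt_cos x))
  have hD : HasDerivAt (fun x => 2 * Real.sin x ^ 2) (2 * (2 * Real.sin x * Real.cos x)) x := by
    have := ((Real.hasDerivAt_sin x).pow 2)
    simpa [mul_comm, mul_assoc, mul_left_comm] using this.const_mul 2
  have := hN.div hD hd
  refine HasDerivAt.congr_deriv (f := Fa) this ?_
  symm
  have hpy := Real.sin_sq_add_cos_sq x
  rw [fp]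
  field_simp
  linear_combination (-Real.sin x) * hpy

lemma fp_bounds {x : ℝ} (hx : x ∈ Set.Ioo (π/2) π) : 0 ≤ fp x ∧ fp x ≤ π^3/16 := by
  obtain ⟨h1, h2⟩ := hx
  set u := π - x with hu
  have hu0 : 0 < u := by simp [hu]; linarith
  have hu2 : u < π/2 := by simp [hu]; linarith
  have hsx : Real.sin x = Real.sin u := by rw [hu, Real.sin_pi_sub]
  have hcx : Real.cos x = -Real.cos u := by have := Real.cos_pi_sub x; rw [← hu] at this; linarith
  have hsu : 0 < Real.sin u := Real.sin_pos_of_pos_of_lt_pi hu0 (by linarith [Real.pi_pos])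
  have hcu : 0 < Real.cos u := Real.cos_pos_of_mem_Ioo ⟨by linarith [Real.pi_pos], hu2⟩
  have hfp : fp x = (Real.sin u - u * Real.cos u) / Real.sin u ^ 3 := by
    rw [fp, hsx, hcx, ← hu]
    field_simp
    ring
  -- numerator bounds
  have htan : u < Real.tan u := Real.lt_tan hu0 hu2
  have hnum0 : 0 ≤ Real.sin u - u * Real.cos u := by
    rw [Real.tan_eq_sin_div_cos, lt_div_iff₀ hcu] at htan
    linarith
  have hsle : Real.sin u ≤ u := Real.sin_le hu0.le
  have hcge : 1 - u^2/2 ≤ Real.cos u := Real.one_sub_sq_div_two_le_cos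
  have hnum1 : Real.sin u - u * Real.cos u ≤ u^3/2 := by nlinarith
  have hjordan : 2/π * u ≤ Real.sin u := Real.mul_le_sin hu0.le hu2.le
  have hpi : 0 < π := Real.pi_pos
  constructor
  · rw [hfp]; positivity
  · rw [hfp]
    rw [div_le_iff₀ (by positivity)]
    have h8 : (2/π * u)^3 ≤ Real.sin u ^3 := by
      apply pow_le_pow_left₀ (by positivity) hjordan
    calc Real.sin u - u * Real.cos u ≤ u^3/2 := hnum1
      _ = π^3/16 * (2/π*u)^3 := by field_simp; ring
      _ ≤ π^3/16 * Real.sin u ^3 := mul_le_mul_of_nonneg_left h8 (by positivity)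

lemma fp_measurable : Measurable fp := by
  unfold fp
  exact (measurable_const.div ((Real.measurable_sin).pow_const 2)).add
    (((measurable_const.sub measurable_id).mul Real.measurable_cos).div
      ((Real.measurable_sin).pow_const 3))

lemma fp_integrable : IntervalIntegrable fp volume (π/2) π := by
  have hpi := Real.pi_pos
  rw [intervalIntegrable_iff_integrableOn_Ioc_of_le (by linarith)]
  refine Measure.integrableOn_of_bounded (M := π^3/16) ?_ ?_ ?_
  · rw [Real.volume_Ioc]; exact ENNReal.ofReal_ne_top
  · exact fp_measurable.aestronglyMeasurable
  · filter_upwards [ae_restrict_mem measurableSet_Ioc] with x hx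
    rcases eq_or_lt_of_le hx.2 with h | h
    · have : fp x = 0 := by simp [fp, h, Real.sin_pi]
      rw [this]; rw [norm_zero]; positivity
    · obtain ⟨h0, h1⟩ := fp_bounds ⟨hx.1, h⟩
      rw [Real.norm_of_nonneg h0]; exact h1

lemma tendsto_Fa_top : Filter.Tendsto Fa (nhdsWithin π (Set.Iio π)) (nhds 0) := by
  have hpi := Real.pi_pos
  have hpi1 := Real.pi_gt_three
  apply tendsto_of_tendsto_of_tendsto_of_le_of_le'
    (g := fun x : ℝ => -(π^2 * (π - x))/8) (h := fun _ : ℝ => (0:ℝ))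
  · have : Filter.Tendsto (fun x : ℝ => -(π^2 * (π - x))/8) (nhds π)
        (nhds (-(π^2 * (π - π))/8)) := (Continuous.tendsto (by continuity) π)
    simp only [sub_self, mul_zero, neg_zero, zero_div] at this
    exact this.mono_left nhdsWithin_le_nhds
  · exact tendsto_const_nhds
  · filter_upwards [Ioo_mem_nhdsLT_of_mem (show π ∈ Set.Ioc (π - 1/2) π by constructor <;> linarith)]
      with x hx
    set u := π - x with hu
    have hu0 : 0 < u := by simp [hu]; linarith [hx.2]
    have hu2 : u < 1/2 := by simp [hu]; linarith [hx.1]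
    have hsx : Real.sin x = Real.sin u := by rw [hu, Real.sin_pi_sub]
    have hcx : Real.cos x = -Real.cos u := by
      have := Real.cos_pi_sub x; rw [← hu] at this; linarith
    have hsu : 0 < Real.sin u := Real.sin_pos_of_pos_of_lt_pi hu0 (by linarith)
    have hFa : Fa x = (-u + Real.sin u * Real.cos u) / (2 * Real.sin u ^ 2) := by
      rw [Fa, hsx, hcx, show x - π = -u by rw [hu]; ring]; ring
    have h2u : Real.sin (2*u) > 2*u - (2*u)^3/4 := by nlinarith [Real.sin_gt_sub_cube (x := 2*u) (by linarith), pow_pos hu0 3]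
    have hsc : Real.sin u * Real.cos u = Real.sin (2*u) / 2 := by
      rw [Real.sin_two_mul]; ring
    have hnum : -u^3 ≤ -u + Real.sin u * Real.cos u := by
      rw [hsc]; nlinarith
    have hjordan : 2/π * u ≤ Real.sin u := Real.mul_le_sin hu0.le (by linarith)
    have hs2 : 4*u^2/π^2 ≤ Real.sin u ^ 2 := by
      have : (2/π*u)^2 ≤ Real.sin u ^2 := pow_le_pow_left₀ (by positivity) hjordan 2
      calc 4*u^2/π^2 = (2/π*u)^2 := by field_simp; ring
        _ ≤ _ := this
    rw [hFa, le_div_iff₀ (by positivity)]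
    have hkey : π^2*u/4 * (4*u^2/π^2) ≤ π^2*u/4 * Real.sin u^2 :=
      mul_le_mul_of_nonneg_left hs2 (by positivity)
    have : π^2*u/4 * (4*u^2/π^2) = u^3 := by field_simp
    nlinarith
  · filter_upwards [Ioo_mem_nhdsLT_of_mem (show π ∈ Set.Ioc (π - 1/2) π by constructor <;> linarith)]
      with x hx
    set u := π - x with hu
    have hu0 : 0 < u := by simp [hu]; linarith [hx.2]
    have hu2 : u < 1/2 := by simp [hu]; linarith [hx.1]
    have hsx : Real.sin x = Real.sin u := by rw [hu, Real.sin_pi_sub]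
    have hcx : Real.cos x = -Real.cos u := by
      have := Real.cos_pi_sub x; rw [← hu] at this; linarith
    have hsu : 0 < Real.sin u := Real.sin_pos_of_pos_of_lt_pi hu0 (by linarith)
    have hFa : Fa x = (-u + Real.sin u * Real.cos u) / (2 * Real.sin u ^ 2) := by
      rw [Fa, hsx, hcx, show x - π = -u by rw [hu]; ring]; ring
    have hsle : Real.sin u ≤ u := Real.sin_le hu0.le
    have hcle : Real.cos u ≤ 1 := Real.cos_le_one u
    have : -u + Real.sin u * Real.cos u ≤ 0 := by nlinarith
    rw [hFa]
    apply div_nonpos_of_nonpos_of_nonneg this (by positivity)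

lemma tendsto_Fa_bot : Filter.Tendsto Fa (nhdsWithin (π/2) (Set.Ioi (π/2))) (nhds (-(π/4))) := by
  have hc : ContinuousAt Fa (π/2) := by
    apply ContinuousAt.div (by fun_prop) (by fun_prop)
    simp [Real.sin_pi_div_two]
  have hval : Fa (π/2) = -(π/4) := by
    simp [Fa, Real.sin_pi_div_two, Real.cos_pi_div_two]
    ring
  have h2 : Filter.Tendsto Fa (nhdsWithin (π/2) (Set.Ioi (π/2))) (nhds (Fa (π/2))) :=
    (hc.continuousWithinAt).tendsto
  rwa [hval] at h2

lemma third_integral :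
    (∫ x in Set.Ioo (π / 2) π,
      (1 / Real.sin x ^ 2 + (π - x) * Real.cos x / Real.sin x ^ 3) / π) = 1 / 4 := by
  have hpi := Real.pi_pos
  have key : ∫ y in (π/2)..π, fp y = 0 - (-(π/4)) :=
    intervalIntegral.integral_eq_sub_of_hasDerivAt_of_tendsto (by linarith)
      (fun x hx => fp_deriv hx) fp_integrable tendsto_Fa_bot tendsto_Fa_top
  rw [intervalIntegral.integral_of_le (by linarith), MeasureTheory.integral_Ioc_eq_integral_Ioo]
    at key
  have : (∫ x in Set.Ioo (π / 2) π,
      (1 / Real.sin x ^ 2 + (π - x) * Real.cos x / Real.sin x ^ 3) / π)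
      = (∫ x in Set.Ioo (π / 2) π, fp x) / π := by
    rw [← integral_div]; rfl
  rw [this, key]
  field_simp
  ring

theorem pinned_obtuse_probability :
    (∫ x in Set.Ioi (π / 2), (if x < π / 2 then (4 / π) * Real.cos x ^ 2 else 0)) = 0 ∧
    (∫ x in Set.Ioo (π / 2) π, (1 / π : ℝ)) = 1 / 2 ∧
    (∫ x in Set.Ioo (π / 2) π,
      (1 / Real.sin x ^ 2 + (π - x) * Real.cos x / Real.sin x ^ 3) / π) = 1 / 4 ∧
    (0 : ℝ) + 1 / 2 + 1 / 4 = 3 / 4 := by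
  have hpi := Real.pi_pos
  refine ⟨?_, ?_, third_integral, by norm_num⟩
  · rw [MeasureTheory.setIntegral_congr_fun measurableSet_Ioi
      (g := fun _ => (0:ℝ)) (fun x hx => if_neg (not_lt.2 (le_of_lt hx)))]
    exact integral_zero _ _
  · rw [MeasureTheory.setIntegral_const, Real.volume_real_Ioo_of_le (by linarith), smul_eq_mul]
    field_simp
    ring
end

section
/- The function q(x) = 1/x³ − (2/(πx³))·arcsin(1/(2x)) for x > 1/2 is a probability density with mean 4/π, and its second moment ∫_{1/2}^∞ x²·q(x) dx diverges to infinity. -/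
open Real MeasureTheory Set Filter
open scoped ENNReal

section aux

lemma sqrt_aux {x : ℝ} (hx : 1/2 < x) :
    Real.sqrt (1 - (1/(2*x))^2) = Real.sqrt (4*x^2-1) / (2*x) := by
  have hx0 : (0:ℝ) < x := by linarith
  have h : 1 - (1/(2*x))^2 = (4*x^2-1) / (2*x)^2 := by field_simp; ring
  rw [h, Real.sqrt_div (by nlinarith), Real.sqrt_sq (by linarith)]

lemma hasDerivAt_A {x : ℝ} (hx : 1/2 < x) :
    HasDerivAt (fun y => Real.arcsin (1/(2*y)))
      (-(1 / (x * Real.sqrt (4*x^2-1)))) x := by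
  have hx0 : (0:ℝ) < x := by linarith
  have h2x : (0:ℝ) < 2 * x := by linarith
  have hne : (2:ℝ) * x ≠ 0 := ne_of_gt h2x
  have hlt : 1/(2*x) < 1 := by rw [div_lt_one h2x]; linarith
  have hgt : (0:ℝ) < 1/(2*x) := by positivity
  have hinner : HasDerivAt (fun y : ℝ => 1/(2*y)) (-(2) / (2*x)^2) x := by
    simp only [one_div]
    exact (((hasDerivAt_id x).const_mul (2:ℝ)).inv hne).congr_deriv (by simp)
  have hout := Real.hasDerivAt_arcsin (x := 1/(2*x)) (by linarith) (ne_of_lt hlt)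
  have := hout.comp x hinner
  refine this.congr_deriv ?_
  rw [sqrt_aux hx]
  have hs : 0 < Real.sqrt (4*x^2-1) := Real.sqrt_pos.2 (by nlinarith)
  field_simp

lemma hasDerivAt_S {x : ℝ} (hx : 1/2 < x) :
    HasDerivAt (fun y => Real.sqrt (4*y^2-1))
      (4*x / Real.sqrt (4*x^2-1)) x := by
  have hs : 0 < Real.sqrt (4*x^2-1) := Real.sqrt_pos.2 (by nlinarith)
  have hinner : HasDerivAt (fun y : ℝ => 4*y^2-1) (8*x) x := by
    have h := (((hasDerivAt_id x).pow 2).const_mul (4:ℝ)).sub_const 1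
    refine h.congr_deriv ?_; simp; ring
  have := hinner.sqrt (by nlinarith [Real.sq_sqrt (by nlinarith : (0:ℝ) ≤ 4*x^2-1)])
  convert this using 1
  field_simp
  ring

noncomputable def Fd (x : ℝ) : ℝ :=
  -(1/2) * (x^2)⁻¹ + (1/π) * (Real.arcsin (1/(2*x)) * (x^2)⁻¹)
    - (2/π) * Real.arcsin (1/(2*x)) + (1/(2*π)) * (Real.sqrt (4*x^2-1) * (x^2)⁻¹)

noncomputable def Gd (x : ℝ) : ℝ :=
  -x⁻¹ + (2/π) * (Real.arcsin (1/(2*x)) * x⁻¹) + (2/π) * (Real.sqrt (4*x^2-1) * x⁻¹)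

lemma hasDerivAt_Fd {x : ℝ} (hx : 1/2 < x) :
    HasDerivAt Fd (1 / x ^ 3 - 2 / (π * x ^ 3) * Real.arcsin (1 / (2 * x))) x := by
  have hπ : (0:ℝ) < π := Real.pi_pos
  have hx0 : (0:ℝ) < x := by linarith
  have hx2 : (x^2 : ℝ) ≠ 0 := by positivity
  have hsnn : (0:ℝ) ≤ 4*x^2-1 := by nlinarith
  have hs : 0 < Real.sqrt (4*x^2-1) := Real.sqrt_pos.2 (by nlinarith)
  have hs2 : Real.sqrt (4*x^2-1) ^ 2 = 4*x^2-1 := Real.sq_sqrt hsnn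
  -- rewritten derivative values without sqrt in denominators
  have hA' : HasDerivAt (fun y => Real.arcsin (1/(2*y)))
      (-(Real.sqrt (4*x^2-1) / (x * (4*x^2-1)))) x := by
    convert hasDerivAt_A hx using 2
    rw [div_eq_div_iff (by nlinarith) (by positivity)]
    nlinarith [hs2]
  have hS' : HasDerivAt (fun y => Real.sqrt (4*y^2-1))
      (4*x*Real.sqrt (4*x^2-1) / (4*x^2-1)) x := by
    convert hasDerivAt_S hx using 1
    rw [div_eq_div_iff (by nlinarith) (by positivity)]
    nlinarith [hs2]
  have hinv : HasDerivAt (fun y : ℝ => (y^2)⁻¹) (-(2*x) / (x^2)^2) x := by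
    have := (hasDerivAt_pow 2 x).inv hx2
    refine this.congr_deriv ?_
    simp
  have h := (((hinv.const_mul (-(1/2:ℝ))).add ((hA'.mul hinv).const_mul (1/π))).sub
      (hA'.const_mul (2/π))).add ((hS'.mul hinv).const_mul (1/(2*π)))
  refine h.congr_deriv ?_
  have h41 : (4*x^2-1) ≠ 0 := by nlinarith
  field_simp
  linear_combination (2 * √(x^2*4-1)) * mul_inv_cancel₀ h41

lemma hasDerivAt_Gd {x : ℝ} (hx : 1/2 < x) :
    HasDerivAt Gd (x * (1 / x ^ 3 - 2 / (π * x ^ 3) * Real.arcsin (1 / (2 * x)))) x := by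
  have hπ : (0:ℝ) < π := Real.pi_pos
  have hx0 : (0:ℝ) < x := by linarith
  have hxne : (x : ℝ) ≠ 0 := ne_of_gt hx0
  have hsnn : (0:ℝ) ≤ 4*x^2-1 := by nlinarith
  have hs : 0 < Real.sqrt (4*x^2-1) := Real.sqrt_pos.2 (by nlinarith)
  have hs2 : Real.sqrt (4*x^2-1) ^ 2 = 4*x^2-1 := Real.sq_sqrt hsnn
  have hA' : HasDerivAt (fun y => Real.arcsin (1/(2*y)))
      (-(Real.sqrt (4*x^2-1) / (x * (4*x^2-1)))) x := by
    convert hasDerivAt_A hx using 2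
    rw [div_eq_div_iff (by nlinarith) (by positivity)]
    nlinarith [hs2]
  have hS' : HasDerivAt (fun y => Real.sqrt (4*y^2-1))
      (4*x*Real.sqrt (4*x^2-1) / (4*x^2-1)) x := by
    convert hasDerivAt_S hx using 1
    rw [div_eq_div_iff (by nlinarith) (by positivity)]
    nlinarith [hs2]
  have hinv : HasDerivAt (fun y : ℝ => y⁻¹) (-1 / x^2) x := by
    exact (hasDerivAt_id x).inv hxne
  have h := ((hinv.neg.add ((hA'.mul hinv).const_mul (2/π))).add
      ((hS'.mul hinv).const_mul (2/π)))
  refine h.congr_deriv ?_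
  have h41 : (4*x^2-1) ≠ 0 := by nlinarith
  field_simp
  linear_combination (2 * √(x^2*4-1)) * mul_inv_cancel₀ h41

end aux
section limits

lemma tendsto_inv_sq : Tendsto (fun x : ℝ => (x^2)⁻¹) atTop (nhds 0) :=
  tendsto_inv_atTop_zero.comp (tendsto_pow_atTop two_ne_zero)

lemma tendsto_arcsinA : Tendsto (fun x : ℝ => Real.arcsin (1/(2*x))) atTop (nhds 0) := by
  have h : Tendsto (fun x : ℝ => 1/(2*x)) atTop (nhds 0) :=
    Tendsto.div_atTop tendsto_const_nhds (Tendsto.const_mul_atTop two_pos tendsto_id)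
  have := (Real.continuous_arcsin.tendsto 0).comp h
  simpa [Real.arcsin_zero, Function.comp_def] using this

lemma tendsto_S_mul_inv_sq :
    Tendsto (fun x : ℝ => Real.sqrt (4*x^2-1) * (x^2)⁻¹) atTop (nhds 0) := by
  have h2 : Tendsto (fun x : ℝ => (x^2)⁻¹) atTop (nhds 0) := tendsto_inv_sq
  have h4 : Tendsto (fun x : ℝ => ((x^2)^2)⁻¹) atTop (nhds 0) :=
    tendsto_inv_atTop_zero.comp ((tendsto_pow_atTop two_ne_zero).comp
      (tendsto_pow_atTop two_ne_zero))
  have h : Tendsto (fun x : ℝ => 4 * (x^2)⁻¹ - ((x^2)^2)⁻¹) atTop (nhds 0) := by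
    simpa using (h2.const_mul (4:ℝ)).sub h4
  have hc := (Real.continuous_sqrt.tendsto 0).comp h
  rw [Real.sqrt_zero] at hc
  apply hc.congr'
  filter_upwards [eventually_ge_atTop (1:ℝ)] with x hx1
  have hx0 : (0:ℝ) < x := by linarith
  have hsnn : (0:ℝ) ≤ 4*x^2-1 := by nlinarith
  have he : 4 * (x^2)⁻¹ - ((x^2)^2)⁻¹ = (4*x^2-1)/((x^2)^2) := by
    field_simp
  simp only [Function.comp]
  rw [he, Real.sqrt_div hsnn, Real.sqrt_sq (by positivity), div_eq_mul_inv]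

lemma tendsto_S_mul_inv :
    Tendsto (fun x : ℝ => Real.sqrt (4*x^2-1) * x⁻¹) atTop (nhds 2) := by
  have h : Tendsto (fun x : ℝ => 4 - (x^2)⁻¹) atTop (nhds 4) := by
    simpa using tendsto_const_nhds.sub tendsto_inv_sq
  have hc := (Real.continuous_sqrt.tendsto 4).comp h
  have h4 : Real.sqrt 4 = 2 := by
    rw [show (4:ℝ) = 2^2 by norm_num, Real.sqrt_sq (by norm_num)]
  rw [h4] at hc
  apply hc.congr'
  filter_upwards [eventually_ge_atTop (1:ℝ)] with x hx1
  have hx0 : (0:ℝ) < x := by linarith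
  have hsnn : (0:ℝ) ≤ 4*x^2-1 := by nlinarith
  have he : 4 - (x^2)⁻¹ = (4*x^2-1)/(x^2) := by field_simp
  simp only [Function.comp]
  rw [he, Real.sqrt_div hsnn, Real.sqrt_sq hx0.le, div_eq_mul_inv]

lemma tendsto_Fd : Tendsto Fd atTop (nhds 0) := by
  have h := (((tendsto_inv_sq.const_mul (-(1/2:ℝ))).add
      ((tendsto_arcsinA.mul tendsto_inv_sq).const_mul (1/π))).sub
      (tendsto_arcsinA.const_mul (2/π))).add (tendsto_S_mul_inv_sq.const_mul (1/(2*π)))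
  have h0 : -(1/2:ℝ)*0 + (1/π)*(0*0) - (2/π)*0 + (1/(2*π))*0 = 0 := by ring
  rw [h0] at h
  exact h

lemma tendsto_Gd : Tendsto Gd atTop (nhds (4/π)) := by
  have hx : Tendsto (fun x : ℝ => x⁻¹) atTop (nhds 0) := tendsto_inv_atTop_zero
  have hAx : Tendsto (fun x : ℝ => Real.arcsin (1/(2*x)) * x⁻¹) atTop (nhds 0) := by
    simpa using tendsto_arcsinA.mul hx
  have h := ((hx.neg.add (hAx.const_mul (2/π))).add (tendsto_S_mul_inv.const_mul (2/π)))
  have : -(0:ℝ) + (2/π) * 0 + (2/π) * 2 = 4/π := by ring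
  rw [this] at h
  exact h

end limits

section cont

lemma contAt_Fd : ContinuousAt Fd (1/2 : ℝ) := by
  have c1 : ContinuousAt (fun y : ℝ => (y^2)⁻¹) (1/2) :=
    ((continuous_pow 2).continuousAt).inv₀ (by norm_num)
  have cA : ContinuousAt (fun y : ℝ => Real.arcsin (1/(2*y))) (1/2) :=
    Real.continuous_arcsin.continuousAt.comp
      (ContinuousAt.div continuousAt_const
        ((continuous_const.mul continuous_id).continuousAt) (by norm_num))
  have cS : ContinuousAt (fun y : ℝ => Real.sqrt (4*y^2-1)) (1/2) :=
    (Real.continuous_sqrt.comp (by continuity)).continuousAt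
  exact (((c1.const_mul _).add ((cA.mul c1).const_mul _)).sub
    (cA.const_mul _)).add ((cS.mul c1).const_mul _)

lemma contAt_Gd : ContinuousAt Gd (1/2 : ℝ) := by
  have c1 : ContinuousAt (fun y : ℝ => y⁻¹) (1/2) :=
    continuousAt_id.inv₀ (by norm_num)
  have cA : ContinuousAt (fun y : ℝ => Real.arcsin (1/(2*y))) (1/2) :=
    Real.continuous_arcsin.continuousAt.comp
      (ContinuousAt.div continuousAt_const
        ((continuous_const.mul continuous_id).continuousAt) (by norm_num))
  have cS : ContinuousAt (fun y : ℝ => Real.sqrt (4*y^2-1)) (1/2) :=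
    (Real.continuous_sqrt.comp (by continuity)).continuousAt
  exact (c1.neg.add ((cA.mul c1).const_mul _)).add ((cS.mul c1).const_mul _)

end cont

section integrability

lemma q_meas : Measurable (fun x : ℝ => 1 / x ^ 3 - 2 / (π * x ^ 3) * Real.arcsin (1 / (2 * x))) := by
  have hA : Measurable fun x : ℝ => Real.arcsin (1/(2*x)) :=
    Real.continuous_arcsin.measurable.comp (measurable_const.div (measurable_id.const_mul 2))
  exact (measurable_const.div (measurable_id.pow_const 3)).sub
    ((measurable_const.div ((measurable_id.pow_const 3).const_mul π)).mul hA)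

lemma q_bounds {x : ℝ} (hx : 1/2 < x) :
    0 ≤ 1 / x ^ 3 - 2 / (π * x ^ 3) * Real.arcsin (1 / (2 * x)) ∧
    1 / x ^ 3 - 2 / (π * x ^ 3) * Real.arcsin (1 / (2 * x)) ≤ 1 / x ^ 3 := by
  have hπ := Real.pi_pos
  have hx0 : (0:ℝ) < x := by linarith
  have hc : (0:ℝ) < 2/(π*x^3) := by positivity
  have hA0 : 0 ≤ Real.arcsin (1/(2*x)) := Real.arcsin_nonneg.2 (by positivity)
  have hA1 : Real.arcsin (1/(2*x)) ≤ π/2 := Real.arcsin_le_pi_div_two _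
  have key : 2/(π*x^3) * (π/2) = 1/x^3 := by field_simp
  constructor
  · nlinarith [mul_le_mul_of_nonneg_left hA1 hc.le]
  · nlinarith [mul_nonneg hc.le hA0]

lemma rpow_neg_three {x : ℝ} (hx0 : 0 < x) : x ^ (-3:ℝ) = 1/x^3 := by
  rw [show (-3:ℝ) = -(3:ℕ) by norm_num, Real.rpow_neg hx0.le, Real.rpow_natCast, one_div]

lemma rpow_neg_two {x : ℝ} (hx0 : 0 < x) : x ^ (-2:ℝ) = 1/x^2 := by
  rw [show (-2:ℝ) = -(2:ℕ) by norm_num, Real.rpow_neg hx0.le, Real.rpow_natCast, one_div]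

lemma q_int : IntegrableOn
    (fun x : ℝ => 1 / x ^ 3 - 2 / (π * x ^ 3) * Real.arcsin (1 / (2 * x)))
    (Set.Ioi (1/2 : ℝ)) := by
  have hg : IntegrableOn (fun x : ℝ => x ^ (-3:ℝ)) (Set.Ioi (1/2 : ℝ)) volume :=
    integrableOn_Ioi_rpow_of_lt (by norm_num) (by norm_num)
  apply Integrable.mono' hg q_meas.aestronglyMeasurable
  rw [ae_restrict_iff' measurableSet_Ioi]
  filter_upwards with x hx
  have hx' : 1/2 < x := hx
  have hx0 : (0:ℝ) < x := by linarith
  obtain ⟨h0, h1⟩ := q_bounds hx'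
  rw [Real.norm_eq_abs, abs_of_nonneg h0, rpow_neg_three hx0]
  exact h1

lemma xq_int : IntegrableOn
    (fun x : ℝ => x * (1 / x ^ 3 - 2 / (π * x ^ 3) * Real.arcsin (1 / (2 * x))))
    (Set.Ioi (1/2 : ℝ)) := by
  have hg : IntegrableOn (fun x : ℝ => x ^ (-2:ℝ)) (Set.Ioi (1/2 : ℝ)) volume :=
    integrableOn_Ioi_rpow_of_lt (by norm_num) (by norm_num)
  apply Integrable.mono' hg (measurable_id.mul q_meas).aestronglyMeasurable
  rw [ae_restrict_iff' measurableSet_Ioi]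
  filter_upwards with x hx
  have hx' : 1/2 < x := hx
  have hx0 : (0:ℝ) < x := by linarith
  obtain ⟨h0, h1⟩ := q_bounds hx'
  simp only [Real.norm_eq_abs, Pi.mul_apply, id_eq]
  rw [abs_of_nonneg (mul_nonneg hx0.le h0), rpow_neg_two hx0]
  calc x * (1 / x ^ 3 - 2 / (π * x ^ 3) * Real.arcsin (1 / (2 * x)))
      ≤ x * (1/x^3) := by
        apply mul_le_mul_of_nonneg_left h1 hx0.le
    _ = 1/x^2 := by field_simp

end integrability

lemma Fd_half : Fd (1/2 : ℝ) = -1 := by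
  have hπ := Real.pi_ne_zero
  simp only [Fd]
  norm_num [Real.arcsin_one]
  field_simp
  ring

lemma Gd_half : Gd (1/2 : ℝ) = 0 := by
  have hπ := Real.pi_ne_zero
  simp only [Gd]
  norm_num [Real.arcsin_one]

lemma lint_top : (∫⁻ x in Set.Ioi (1 : ℝ), ENNReal.ofReal ((2/3) * x⁻¹)) = ⊤ := by
  by_contra h
  have hfm : AEStronglyMeasurable (fun x : ℝ => (2/3) * x⁻¹)
      (volume.restrict (Set.Ioi (1:ℝ))) :=
    (measurable_inv.const_mul (2/3)).aestronglyMeasurable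
  have hpos : 0 ≤ᵐ[volume.restrict (Set.Ioi (1:ℝ))] fun x : ℝ => (2/3) * x⁻¹ := by
    filter_upwards [ae_restrict_mem measurableSet_Ioi] with x hx
    have : (0:ℝ) < x := lt_trans one_pos hx
    positivity
  have hint : IntegrableOn (fun x : ℝ => (2/3) * x⁻¹) (Set.Ioi (1:ℝ)) := by
    refine ⟨hfm, ?_⟩
    rw [hasFiniteIntegral_iff_ofReal hpos]
    exact lt_top_iff_ne_top.2 h
  have hint2 : IntegrableOn (fun x : ℝ => x ^ (-1:ℝ)) (Set.Ioi (1:ℝ)) := by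
    have h32 := hint.const_mul (3/2 : ℝ)
    apply IntegrableOn.congr_fun h32 ?_ measurableSet_Ioi
    intro x hx
    have hx0 : (0:ℝ) < x := lt_trans one_pos hx
    show (3:ℝ)/2 * (2/3 * x⁻¹) = x ^ (-1:ℝ)
    rw [Real.rpow_neg_one]
    ring
  rw [integrableOn_Ioi_rpow_iff one_pos] at hint2
  norm_num at hint2

theorem pinned_b_div_a_density :
    (∫ x in Set.Ioi (1 / 2 : ℝ),
      (1 / x ^ 3 - (2 / (π * x ^ 3)) * Real.arcsin (1 / (2 * x)))) = 1 ∧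
    (∫ x in Set.Ioi (1 / 2 : ℝ),
      x * (1 / x ^ 3 - (2 / (π * x ^ 3)) * Real.arcsin (1 / (2 * x)))) = 4 / π ∧
    (∫⁻ x in Set.Ioi (1 / 2 : ℝ),
      ENNReal.ofReal (x ^ 2 *
        (1 / x ^ 3 - (2 / (π * x ^ 3)) * Real.arcsin (1 / (2 * x))))) = ⊤ := by
  refine ⟨?_, ?_, ?_⟩
  · have key := integral_Ioi_of_hasDerivAt_of_tendsto (a := (1/2:ℝ)) (m := 0)
      contAt_Fd.continuousWithinAt (fun x hx => hasDerivAt_Fd hx) q_int tendsto_Fd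
    rw [key, Fd_half]
    norm_num
  · have key := integral_Ioi_of_hasDerivAt_of_tendsto (a := (1/2:ℝ)) (m := 4/π)
      contAt_Gd.continuousWithinAt (fun x hx => hasDerivAt_Gd hx) xq_int tendsto_Gd
    rw [key, Gd_half]
    norm_num
  · rw [eq_top_iff]
    calc (⊤ : ℝ≥0∞) = ∫⁻ x in Set.Ioi (1:ℝ), ENNReal.ofReal ((2/3) * x⁻¹) := lint_top.symm
      _ ≤ ∫⁻ x in Set.Ioi (1:ℝ), ENNReal.ofReal (x ^ 2 *
            (1 / x ^ 3 - 2 / (π * x ^ 3) * Real.arcsin (1 / (2 * x)))) := by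
          apply setLIntegral_mono' measurableSet_Ioi
          intro x hx
          have hx1 : (1:ℝ) < x := hx
          have hx0 : (0:ℝ) < x := lt_trans one_pos hx1
          have hπ := Real.pi_pos
          apply ENNReal.ofReal_le_ofReal
          have hA6 : Real.arcsin (1/(2*x)) ≤ π/6 := by
            have hle : (1:ℝ)/(2*x) ≤ 1/2 := by
              rw [div_le_div_iff₀ (by linarith) (by norm_num)]
              linarith
            have := Real.monotone_arcsin hle
            have harc : Real.arcsin (1/2 : ℝ) = π/6 :=
              Real.arcsin_eq_of_sin_eq Real.sin_pi_div_six
                ⟨by linarith, by linarith⟩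
            linarith [harc ▸ this]
          have hc : (0:ℝ) < 2/(π*x) := by positivity
          have hmul := mul_le_mul_of_nonneg_left hA6 hc.le
          have key2 : 2/(π*x) * (π/6) = 1/(3*x) := by field_simp; ring
          have hexp : x ^ 2 * (1 / x ^ 3 - 2 / (π * x ^ 3) * Real.arcsin (1 / (2 * x)))
              = 1/x - 2/(π*x) * Real.arcsin (1/(2*x)) := by
            field_simp
          have hfinal : (2/3 : ℝ) * x⁻¹ = 1/x - 1/(3*x) := by
            field_simp
            ring
          rw [hexp, hfinal]
          linarith [key2 ▸ hmul]
      _ ≤ _ := lintegral_mono_set (Set.Ioi_subset_Ioi (by norm_num))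
end

section
/- The double integral 2∫₀^{π/2}∫_{π/2−α}^{π/2} exp(−(π/4)·[sin(α−β)² + 4sin(α)²sin(β)²]/sin(α+β)²)·sin(α)sin(β)/sin(α+β)³ dβ dα equals e^{−π/4} − erfc(√π/2). -/
open Real MeasureTheory

open Set

noncomputable def phi : ℝ × ℝ → ℝ := fun p => Real.exp (-π * (p.1^2 + p.2^2))

def Sp : Set (ℝ × ℝ) := {p | 0 < p.2 ∧ |p.1| < 1/2 ∧ 1/4 < p.1^2 + p.2^2}


lemma gauss_Ioi : ∫ y in Ioi (0:ℝ), Real.exp (-π * y ^ 2) = 1 / 2 := by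
  rw [integral_gaussian_Ioi π, div_self pi_pos.ne', Real.sqrt_one]

lemma halfdisk_r : ∫ r in Ioc (0:ℝ) (1/2), r * Real.exp (-π * r ^ 2)
    = (1 - Real.exp (-π/4)) / (2 * π) := by
  have hle : (0:ℝ) ≤ 1/2 := by norm_num
  rw [← intervalIntegral.integral_of_le hle]
  have hd : ∀ r ∈ Set.uIcc (0:ℝ) (1/2), HasDerivAt (fun r => -(2*π)⁻¹ * Real.exp (-π * r ^ 2))
      (r * Real.exp (-π * r ^ 2)) r := by
    intro r _
    have h1 : HasDerivAt (fun r : ℝ => -π * r ^ 2) (-π * (2 * r)) r := by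
      simpa using ((hasDerivAt_pow 2 r).const_mul (-π))
    have h2 := (h1.exp).const_mul (-(2*π)⁻¹)
    refine h2.congr_deriv ?_
    have hπ : (2*π)⁻¹ * (2*π) = 1 := inv_mul_cancel₀ (by positivity)
    linear_combination (r * Real.exp (-π * r ^ 2)) * hπ
  rw [intervalIntegral.integral_eq_sub_of_hasDerivAt hd
    (((by continuity : Continuous fun r : ℝ => r * Real.exp (-π * r ^ 2)).intervalIntegrable) _ _)]
  have : ((1:ℝ)/2) ^ 2 = 1/4 := by norm_num
  rw [this]
  have : -π * ((1:ℝ)/4) = -π/4 := by ring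
  rw [this]
  simp
  field_simp
  ring

lemma strip_x : ∫ x in Ioo (-(1:ℝ)/2) (1/2), Real.exp (-π * x ^ 2)
    = 1 - erfc (Real.sqrt π / 2) := by
  have hint : Integrable (fun x : ℝ => Real.exp (-π * x ^ 2)) := integrable_exp_neg_mul_sq pi_pos
  have hIoi : ∫ x in Ioi ((1:ℝ)/2), Real.exp (-π * x ^ 2)
      = (Real.sqrt π)⁻¹ * ∫ s in Ioi (Real.sqrt π / 2), Real.exp (-s ^ 2) := by
    have h := integral_comp_mul_left_Ioi (fun s => Real.exp (-s ^ 2)) (1/2)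
      (sqrt_pos.mpr pi_pos)
    simp only [smul_eq_mul] at h
    have he : ∀ x : ℝ, Real.exp (-π * x ^ 2) = Real.exp (-(Real.sqrt π * x) ^ 2) := by
      intro x
      rw [mul_pow, sq_sqrt pi_pos.le]
      ring_nf
    simp only [he]
    rw [h]
    have : Real.sqrt π * (1/2) = Real.sqrt π / 2 := by ring
    rw [this]
  -- now split the line
  have hadd : (∫ x in Ioc (0:ℝ) (1/2), Real.exp (-π * x ^ 2))
      + ∫ x in Ioi ((1:ℝ)/2), Real.exp (-π * x ^ 2)
      = ∫ x in Ioi (0:ℝ), Real.exp (-π * x ^ 2) := by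
    rw [← setIntegral_union (Ioc_disjoint_Ioi le_rfl) measurableSet_Ioi
      hint.integrableOn hint.integrableOn,
      Ioc_union_Ioi_eq_Ioi (by norm_num : (0:ℝ) ≤ 1/2)]
  have heven : ∫ x in Ioo (-(1:ℝ)/2) (1/2), Real.exp (-π * x ^ 2)
      = 2 * ∫ x in Ioc (0:ℝ) (1/2), Real.exp (-π * x ^ 2) := by
    rw [← integral_Ioc_eq_integral_Ioo, ← intervalIntegral.integral_of_le
      (by norm_num : -(1:ℝ)/2 ≤ 1/2),
      ← intervalIntegral.integral_of_le (by norm_num : (0:ℝ) ≤ 1/2)]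
    have hs : ∫ x in (-(1/2):ℝ)..(0:ℝ), Real.exp (-π * x ^ 2)
        = ∫ x in (0:ℝ)..(1/2:ℝ), Real.exp (-π * x ^ 2) := by
      have := intervalIntegral.integral_comp_neg (a := (0:ℝ)) (b := (1/2:ℝ))
        (fun x => Real.exp (-π * x ^ 2))
      simp only [neg_zero, neg_sq] at this
      rw [← this]
    rw [show (-(1:ℝ)/2) = (-(1/2):ℝ) by norm_num,
      ← intervalIntegral.integral_add_adjacent_intervals
      (hint.intervalIntegrable : IntervalIntegrable _ volume (-(1/2):ℝ) 0)
      (hint.intervalIntegrable : IntervalIntegrable _ volume 0 (1/2:ℝ)), hs]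
    ring
  rw [heven]
  have : ∫ x in Ioc (0:ℝ) (1/2), Real.exp (-π * x ^ 2)
      = 1/2 - (Real.sqrt π)⁻¹ * ∫ s in Ioi (Real.sqrt π / 2), Real.exp (-s ^ 2) := by
    have h2 := hadd
    rw [gauss_Ioi, hIoi] at h2
    linarith
  rw [this, erfc]
  have hs : Real.sqrt π ≠ 0 := (sqrt_pos.mpr pi_pos).ne'
  field_simp


def Dp : Set (ℝ × ℝ) := {p | 0 < p.2 ∧ p.1^2 + p.2^2 ≤ 1/4}

lemma measDp : MeasurableSet Dp := by
  apply MeasurableSet.inter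
  · exact measurableSet_lt measurable_const measurable_snd
  · exact measurableSet_le (by fun_prop : Measurable fun p : ℝ × ℝ => p.1^2 + p.2^2) measurable_const

lemma sin_pos_iff_mem {θ : ℝ} (h : θ ∈ Ioo (-π) π) : 0 < Real.sin θ ↔ θ ∈ Ioo 0 π := by
  constructor
  · intro hs
    rcases le_or_gt θ 0 with h0 | h0
    · exfalso
      have : Real.sin (-θ) ≥ 0 := sin_nonneg_of_nonneg_of_le_pi (by linarith) (by linarith [h.1])
      rw [Real.sin_neg] at this
      linarith
    · exact ⟨h0, h.2⟩
  · intro ⟨h1, h2⟩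
    exact sin_pos_of_pos_of_lt_pi h1 h2

lemma Dp_polar : ∫ p in Dp, phi p = (1 - Real.exp (-π/4)) / 2 := by
  have key := integral_comp_polarCoord_symm (Set.indicator Dp phi)
  rw [integral_indicator measDp] at key
  rw [← key]
  have hcong : EqOn (fun p : ℝ × ℝ => p.1 • (Set.indicator Dp phi) (polarCoord.symm p))
      (fun p : ℝ × ℝ => (Set.indicator (Ioc 0 (1/2)) (fun r => r * Real.exp (-π * r^2)) p.1)
        * (Set.indicator (Ioo 0 π) (fun _ => (1:ℝ)) p.2)) polarCoord.target := by
    intro p hp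
    rw [show polarCoord.target = Ioi (0:ℝ) ×ˢ Ioo (-π) π from rfl] at hp
    obtain ⟨hr, hθ⟩ := hp
    simp only [Set.mem_Ioi] at hr
    have hsymm : polarCoord.symm p = (p.1 * Real.cos p.2, p.1 * Real.sin p.2) := rfl
    have hnormsq : (p.1 * Real.cos p.2)^2 + (p.1 * Real.sin p.2)^2 = p.1^2 := by
      have := Real.sin_sq_add_cos_sq p.2
      nlinarith [this]
    have hmem : polarCoord.symm p ∈ Dp ↔ (p.1 ∈ Ioc 0 (1/2) ∧ p.2 ∈ Ioo 0 π) := by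
      rw [hsymm]
      constructor
      · intro ⟨h1, h2⟩
        simp only at h1 h2
        rw [hnormsq] at h2
        have hsin : 0 < Real.sin p.2 := by
          by_contra hc
          push_neg at hc
          nlinarith
        refine ⟨⟨hr, ?_⟩, (sin_pos_iff_mem hθ).mp hsin⟩
        nlinarith
      · intro ⟨⟨_, h1⟩, h2⟩
        have hsin := (sin_pos_iff_mem hθ).mpr h2
        refine ⟨by positivity, ?_⟩
        simp only
        rw [hnormsq]
        nlinarith
    by_cases hm : polarCoord.symm p ∈ Dp
    · have ⟨hm1, hm2⟩ := hmem.mp hm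
      simp only [Set.indicator_of_mem hm, Set.indicator_of_mem hm1, Set.indicator_of_mem hm2]
      have : phi (polarCoord.symm p) = Real.exp (-π * p.1^2) := by
        rw [hsymm]; unfold phi; simp only; rw [hnormsq]
      rw [this]
      simp [smul_eq_mul]
    · simp only [Set.indicator_of_notMem hm, smul_zero]
      rcases not_and_or.mp (fun h => hm (hmem.mpr h)) with h | h
      · rw [Set.indicator_of_notMem h]; ring
      · rw [Set.indicator_of_notMem h]; ring
  rw [show polarCoord.target = Ioi (0:ℝ) ×ˢ Ioo (-π) π from rfl] at hcong ⊢
  rw [setIntegral_congr_fun (measurableSet_Ioi.prod measurableSet_Ioo) hcong]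
  rw [Measure.volume_eq_prod ℝ ℝ, setIntegral_prod_mul]
  have h1 : ∫ r in Ioi (0:ℝ), Set.indicator (Ioc 0 (1/2)) (fun r => r * Real.exp (-π * r^2)) r
      = ∫ r in Ioc (0:ℝ) (1/2), r * Real.exp (-π * r^2) := by
    rw [setIntegral_indicator (by measurability), Set.inter_eq_right.mpr]
    intro x hx; exact hx.1
  have h2 : ∫ θ in Ioo (-π) π, Set.indicator (Ioo 0 π) (fun _ => (1:ℝ)) θ = π := by
    rw [setIntegral_indicator measurableSet_Ioo]
    have hss : Ioo (-π) π ∩ Ioo 0 π = Ioo 0 π := by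
      apply Set.inter_eq_right.mpr
      intro x hx
      rw [Set.mem_Ioo] at hx ⊢
      exact ⟨by linarith [pi_pos, hx.1], hx.2⟩
    rw [hss]
    simp [Real.volume_Ioo]
    linarith [pi_pos]
  have h3 : ∫ r in Ioc (0:ℝ) (1/2), r * Real.exp (-π * r^2) = (1 - Real.exp (-π/4)) / (2*π) := by
    have := halfdisk_r
    simpa [pow_two] using this
  rw [h1, h2, h3]
  field_simp


def Tset : Set (ℝ × ℝ) := {q | q.2 ∈ Ioo 0 (π/2) ∧ q.1 ∈ Ioo (Real.cos q.2) (Real.cos q.2)⁻¹}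

noncomputable def psi : ℝ × ℝ → ℝ :=
  fun q => q.1 * Real.exp (-π * (q.1^2 - q.1 * Real.cos q.2 + 1/4))

lemma measSp : MeasurableSet Sp := by
  apply MeasurableSet.inter (measurableSet_lt measurable_const measurable_snd)
  apply MeasurableSet.inter
  · exact measurableSet_lt (by fun_prop : Measurable fun p : ℝ × ℝ => |p.1|) measurable_const
  · exact measurableSet_lt measurable_const
      (by fun_prop : Measurable fun p : ℝ × ℝ => p.1^2 + p.2^2)

lemma measT : MeasurableSet Tset := by
  apply MeasurableSet.inter
  · exact MeasurableSet.inter (measurableSet_lt measurable_const measurable_snd)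
      (measurableSet_lt measurable_snd measurable_const)
  apply MeasurableSet.inter
  · exact measurableSet_lt (by fun_prop : Measurable fun q : ℝ × ℝ => Real.cos q.2) measurable_fst
  · exact measurableSet_lt measurable_fst
      ((by fun_prop : Measurable fun q : ℝ × ℝ => Real.cos q.2).inv)


lemma Tmem {r θ : ℝ} (hr : 0 < r) (hθ : θ ∈ Ioo (-π) π) :
    ((r * Real.cos θ - 1/2, r * Real.sin θ) ∈ Sp) ↔ ((r, θ) ∈ Tset) := by
  have hpyth := Real.sin_sq_add_cos_sq θ
  have hsq : (r * Real.cos θ - 1/2)^2 + (r * Real.sin θ)^2 = r^2 - r * Real.cos θ + 1/4 := by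
    nlinarith
  constructor
  · rintro ⟨h1, h2, h3⟩
    simp only at h1 h2 h3
    rw [hsq] at h3
    have hsin : 0 < Real.sin θ := by nlinarith
    have hθ1 : θ ∈ Ioo 0 π := (sin_pos_iff_mem hθ).mp hsin
    rw [abs_lt] at h2
    have hcos : 0 < Real.cos θ := by nlinarith [h2.1]
    have hθ2 : θ < π/2 := by
      by_contra hc
      push_neg at hc
      have := Real.cos_nonpos_of_pi_div_two_le_of_le hc (by linarith [hθ1.2, pi_pos])
      linarith
    refine ⟨⟨hθ1.1, hθ2⟩, ⟨by nlinarith, ?_⟩⟩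
    rw [inv_eq_one_div, lt_div_iff₀ hcos]
    nlinarith [h2.2]
  · rintro ⟨⟨hθ1, hθ2⟩, ⟨h1, h2⟩⟩
    have hcos : 0 < Real.cos θ := Real.cos_pos_of_mem_Ioo ⟨by linarith [pi_pos], hθ2⟩
    have hsin : 0 < Real.sin θ := sin_pos_of_pos_of_lt_pi hθ1 (by linarith [pi_pos, hθ2])
    have hrc1 : r * Real.cos θ < 1 := by
      rw [inv_eq_one_div, lt_div_iff₀ hcos] at h2
      linarith
    refine ⟨by positivity, ?_, ?_⟩
    · simp only
      rw [abs_lt]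
      constructor <;> nlinarith
    · simp only
      rw [hsq]
      nlinarith

lemma psi_cont : Continuous psi := by unfold psi; fun_prop

lemma integrable_T : Integrable (Set.indicator Tset psi) := by
  have hm : AEStronglyMeasurable (Set.indicator Tset psi) volume :=
    (psi_cont.aestronglyMeasurable).indicator measT
  have ha : Integrable (fun x : ℝ => |x| * Real.exp (-π * x^2)) := by
    have h := (integrable_mul_exp_neg_mul_sq (b := π) pi_pos).abs
    have : (fun x : ℝ => |x * Real.exp (-π * x^2)|) = fun x : ℝ => |x| * Real.exp (-π * x^2) := by
      funext x
      rw [abs_mul, abs_of_pos (Real.exp_pos _)]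
    rwa [this] at h
  have hb : Integrable (fun x : ℝ => Real.exp (-π * x^2) * (1/2)) :=
    (integrable_exp_neg_mul_sq pi_pos).mul_const _
  have hsum : Integrable (fun x : ℝ => (|x| + 1/2) * Real.exp (-π * x^2)) := by
    have h := ha.add hb
    refine h.congr ?_
    filter_upwards with x
    simp only [Pi.add_apply]
    ring
  have hg1 : Integrable (fun x : ℝ => (|x - 1/2| + 1/2) * Real.exp (-π * (x - 1/2)^2)) :=
    hsum.comp_sub_right (1/2)
  have hg2 : Integrable (Set.indicator (Ioo 0 (π/2)) (fun _ => (1:ℝ))) := by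
    rw [integrable_indicator_iff measurableSet_Ioo]
    apply (integrableOn_const_iff (C := (1:ℝ))).mpr
    right
    rw [Real.volume_Ioo]
    exact ENNReal.ofReal_lt_top
  have hprod : Integrable (fun q : ℝ × ℝ =>
      ((|q.1 - 1/2| + 1/2) * Real.exp (-π * (q.1 - 1/2)^2))
        * Set.indicator (Ioo 0 (π/2)) (fun _ => (1:ℝ)) q.2) := by
    rw [Measure.volume_eq_prod ℝ ℝ]
    exact hg1.mul_prod hg2
  apply hprod.mono' hm
  filter_upwards with q
  by_cases hq : q ∈ Tset
  · rw [Set.indicator_of_mem hq]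
    obtain ⟨⟨ht1, ht2⟩, hr1, hr2⟩ := hq
    have hcos : 0 < Real.cos q.2 :=
      Real.cos_pos_of_mem_Ioo ⟨by linarith [pi_pos], ht2⟩
    have hr : 0 < q.1 := lt_trans hcos hr1
    have hψpos : 0 < psi q := by
      unfold psi
      positivity
    have hmem2 : q.2 ∈ Ioo 0 (π/2) := ⟨ht1, ht2⟩
    rw [Real.norm_eq_abs, abs_of_pos hψpos, Set.indicator_of_mem hmem2, mul_one]
    unfold psi
    have h1 : q.1 ≤ |q.1 - 1/2| + 1/2 := by
      cases abs_cases (q.1 - 1/2) with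
      | inl h => rw [h.1]; linarith
      | inr h => rw [h.1]; linarith
    have h2 : Real.exp (-π * (q.1^2 - q.1 * Real.cos q.2 + 1/4))
        ≤ Real.exp (-π * (q.1 - 1/2)^2) := by
      apply Real.exp_le_exp.mpr
      nlinarith [mul_nonneg (mul_nonneg pi_pos.le hr.le)
        (sub_nonneg.mpr (Real.cos_le_one q.2))]
    exact mul_le_mul h1 h2 (Real.exp_pos _).le (by positivity)
  · rw [Set.indicator_of_notMem hq, norm_zero]
    exact mul_nonneg (by positivity) (Set.indicator_nonneg (fun _ _ => zero_le_one) _)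

lemma Tsub : Tset ⊆ Ioi (0:ℝ) ×ˢ Ioo (-π) π := by
  rintro ⟨r, θ⟩ ⟨⟨h1, h2⟩, h3, _⟩
  have hcos : 0 < Real.cos θ := Real.cos_pos_of_mem_Ioo ⟨by linarith [pi_pos], h2⟩
  exact ⟨lt_trans hcos h3, ⟨by linarith [pi_pos], by linarith [pi_pos]⟩⟩

lemma iterated_eq_Sp :
    ∫ α in Ioo (0:ℝ) (π/2), ∫ t in Ioo (Real.cos α) (Real.cos α)⁻¹,
        t * Real.exp (-π * (t^2 - t * Real.cos α + 1/4))
      = ∫ p in Sp, phi p := by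
  -- step: RHS as full-space integral of shifted indicator
  have h1 : ∫ p in Sp, phi p = ∫ p, Set.indicator Sp phi p := (integral_indicator measSp).symm
  have h2 : ∫ p, Set.indicator Sp phi p
      = ∫ p, Set.indicator Sp phi (p + ((-(1/2) : ℝ), (0:ℝ))) := by
    exact (integral_add_right_eq_self _ _).symm
  have h3 := integral_comp_polarCoord_symm
    (fun p => Set.indicator Sp phi (p + ((-(1/2) : ℝ), (0:ℝ))))
  rw [h1, h2, ← h3]
  rw [show polarCoord.target = Ioi (0:ℝ) ×ˢ Ioo (-π) π from rfl]
  have hcong : EqOn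
      (fun p : ℝ × ℝ => p.1 • Set.indicator Sp phi (polarCoord.symm p + ((-(1/2) : ℝ), (0:ℝ))))
      (Set.indicator Tset psi) (Ioi (0:ℝ) ×ˢ Ioo (-π) π) := by
    rintro ⟨r, θ⟩ ⟨hr, hθ⟩
    simp only [Set.mem_Ioi] at hr
    have hsymm : (polarCoord.symm (r, θ) : ℝ × ℝ) + ((-(1/2) : ℝ), (0:ℝ))
        = (r * Real.cos θ - 1/2, r * Real.sin θ) := by
      show (r * Real.cos θ + -(1/2), r * Real.sin θ + 0) = _
      rw [add_zero]
      norm_num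
      ring_nf
    simp only [hsymm]
    have hmem := Tmem hr hθ
    by_cases hT : (r, θ) ∈ Tset
    · rw [Set.indicator_of_mem (hmem.mpr hT), Set.indicator_of_mem hT]
      have hval : phi (r * Real.cos θ - 1/2, r * Real.sin θ)
          = Real.exp (-π * (r^2 - r * Real.cos θ + 1/4)) := by
        unfold phi
        simp only
        congr 1
        linear_combination (-π * r^2) * (Real.sin_sq_add_cos_sq θ)
      rw [hval]
      unfold psi
      simp [smul_eq_mul]
    · rw [Set.indicator_of_notMem (fun h => hT (hmem.mp h)), Set.indicator_of_notMem hT,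
        smul_zero]
  rw [setIntegral_congr_fun (measurableSet_Ioi.prod measurableSet_Ioo) hcong]
  rw [setIntegral_indicator measT, Set.inter_eq_right.mpr Tsub,
    ← integral_indicator measT]
  have hInt : Integrable (Set.indicator Tset psi) ((volume : Measure ℝ).prod volume) := by
    rw [← Measure.volume_eq_prod ℝ ℝ]; exact integrable_T
  rw [Measure.volume_eq_prod ℝ ℝ, integral_prod_symm _ hInt]
  have hpt : ∀ θ : ℝ, (∫ r : ℝ, Set.indicator Tset psi (r, θ))
      = Set.indicator (Ioo 0 (π/2))
          (fun θ => ∫ r in Ioo (Real.cos θ) (Real.cos θ)⁻¹, psi (r, θ)) θ := by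
    intro θ
    by_cases hθ : θ ∈ Ioo 0 (π/2)
    · rw [Set.indicator_of_mem hθ]
      have : (fun r : ℝ => Set.indicator Tset psi (r, θ))
          = Set.indicator (Ioo (Real.cos θ) (Real.cos θ)⁻¹) (fun r => psi (r, θ)) := by
        funext r
        by_cases hrmem : r ∈ Ioo (Real.cos θ) (Real.cos θ)⁻¹
        · have hT2 : (r, θ) ∈ Tset := ⟨hθ, hrmem⟩
          rw [Set.indicator_of_mem hrmem, Set.indicator_of_mem hT2]
        · rw [Set.indicator_of_notMem hrmem,
            Set.indicator_of_notMem (fun h => hrmem h.2)]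
      rw [this, integral_indicator measurableSet_Ioo]
    · rw [Set.indicator_of_notMem hθ]
      have : (fun r : ℝ => Set.indicator Tset psi (r, θ)) = fun _ => 0 := by
        funext r
        exact Set.indicator_of_notMem (fun h => hθ h.1) _
      rw [this, integral_zero]
  simp only [hpt]
  rw [integral_indicator measurableSet_Ioo]
  simp only [psi]


lemma phi_integrable : Integrable phi := by
  have heq : phi = fun p : ℝ × ℝ => Real.exp (-π * p.1^2) * Real.exp (-π * p.2^2) := by
    funext p
    unfold phi
    rw [← Real.exp_add]
    ring_nf
  rw [heq, Measure.volume_eq_prod ℝ ℝ]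
  exact (integrable_exp_neg_mul_sq pi_pos).mul_prod (integrable_exp_neg_mul_sq pi_pos)

lemma union_eq : Ioo (-(1:ℝ)/2) (1/2) ×ˢ Ioi (0:ℝ) = Sp ∪ Dp := by
  ext ⟨x, y⟩
  simp only [Set.mem_prod, Set.mem_Ioo, Set.mem_Ioi, Set.mem_union]
  constructor
  · rintro ⟨⟨hx1, hx2⟩, hy⟩
    rcases le_or_gt (x^2 + y^2) (1/4) with h | h
    · exact Or.inr ⟨hy, h⟩
    · exact Or.inl ⟨hy, abs_lt.mpr ⟨by linarith, hx2⟩, h⟩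
  · rintro (⟨hy, hx, _⟩ | ⟨hy, h⟩)
    · rw [abs_lt] at hx
      exact ⟨⟨by linarith [hx.1], hx.2⟩, hy⟩
    · have hx2 : x^2 < 1/4 := by nlinarith
      constructor
      · constructor <;> nlinarith
      · exact hy
  
lemma disj : Disjoint Sp Dp := by
  rw [Set.disjoint_left]
  rintro p ⟨_, _, h1⟩ ⟨_, h2⟩
  linarith

lemma Sp_val : ∫ p in Sp, phi p
    = (1 - erfc (Real.sqrt π / 2)) / 2 - (1 - Real.exp (-π/4)) / 2 := by
  have hstrip : ∫ p in Ioo (-(1:ℝ)/2) (1/2) ×ˢ Ioi (0:ℝ), phi p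
      = (1 - erfc (Real.sqrt π / 2)) / 2 := by
    have heq : phi = fun p : ℝ × ℝ => Real.exp (-π * p.1^2) * Real.exp (-π * p.2^2) := by
      funext p
      unfold phi
      rw [← Real.exp_add]
      ring_nf
    rw [Measure.volume_eq_prod ℝ ℝ]
    simp only [heq]
    rw [setIntegral_prod_mul (μ := volume) (ν := volume) (fun x : ℝ => Real.exp (-π * x^2))
      (fun y : ℝ => Real.exp (-π * y^2)) (Ioo (-(1:ℝ)/2) (1/2)) (Ioi 0)]
    have hx := strip_x
    have hy := gauss_Ioi
    simp only [pow_two] at hx hy ⊢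
    rw [hx, hy]
    ring
  have hsum := setIntegral_union disj measDp phi_integrable.integrableOn
    phi_integrable.integrableOn (f := phi) (μ := volume)
  rw [← union_eq] at hsum
  rw [hstrip, Dp_polar] at hsum
  linarith

lemma inner_subst {α : ℝ} (hα : α ∈ Ioo (0:ℝ) (π/2)) :
    (∫ β in Ioo (π / 2 - α) (π / 2),
        Real.exp (-(π / 4) * (Real.sin (α - β) ^ 2 + 4 * Real.sin α ^ 2 * Real.sin β ^ 2) /
            Real.sin (α + β) ^ 2) *
          (Real.sin α * Real.sin β / Real.sin (α + β) ^ 3))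
      = ∫ t in Ioo (Real.cos α) (Real.cos α)⁻¹,
          t * Real.exp (-π * (t^2 - t * Real.cos α + 1/4)) := by
  obtain ⟨hα0, hα2⟩ := hα
  have hπ := pi_pos
  have hcos : 0 < Real.cos α := Real.cos_pos_of_mem_Ioo ⟨by linarith, hα2⟩
  have hcos1 : Real.cos α < 1 := by
    have h := Real.cos_lt_cos_of_nonneg_of_le_pi (le_refl 0) (by linarith) hα0
    rwa [Real.cos_zero] at h
  have hab : Real.cos α < (Real.cos α)⁻¹ := by
    rw [inv_eq_one_div, lt_div_iff₀ hcos]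
    nlinarith
  have hle : π / 2 - α ≤ π / 2 := by linarith
  have hsin_ne : ∀ β ∈ Set.uIcc (π / 2 - α) (π / 2), Real.sin (α + β) ≠ 0 := by
    intro β hβ
    rw [Set.uIcc_of_le hle, Set.mem_Icc] at hβ
    have h1 : 0 < α + β := by linarith [hβ.1]
    have h2 : α + β < π := by linarith [hβ.2]
    exact (Real.sin_pos_of_pos_of_lt_pi h1 h2).ne'
  -- the substitution map
  set f : ℝ → ℝ := fun β => Real.sin β / Real.sin (α + β) with hf
  set g : ℝ → ℝ := fun t => t * Real.exp (-π * (t^2 - t * Real.cos α + 1/4)) with hg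
  have hderiv : ∀ β ∈ Set.uIcc (π / 2 - α) (π / 2),
      HasDerivAt f (Real.sin α / Real.sin (α + β) ^ 2) β := by
    intro β hβ
    have hne := hsin_ne β hβ
    have h1 : HasDerivAt (fun β : ℝ => Real.sin β) (Real.cos β) β := Real.hasDerivAt_sin β
    have h2 : HasDerivAt (fun β : ℝ => Real.sin (α + β)) (Real.cos (α + β)) β := by
      have := ((hasDerivAt_id β).const_add α).sin
      simpa using this
    have := h1.div h2 hne
    refine this.congr_deriv ?_
    rw [div_eq_div_iff (by positivity) (by positivity)]
    have hnum : Real.cos β * Real.sin (α + β) - Real.sin β * Real.cos (α + β)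
        = Real.sin α := by
      have := Real.sin_sub (α + β) β
      rw [add_sub_cancel_right] at this
      linarith [this]
    nlinarith [hnum]
  have hcont : ContinuousOn (fun β => Real.sin α / Real.sin (α + β) ^ 2)
      (Set.uIcc (π / 2 - α) (π / 2)) := by
    apply ContinuousOn.div continuousOn_const
    · exact ((Real.continuous_sin.comp (continuous_const.add continuous_id)).pow 2).continuousOn
    · intro β hβ
      exact pow_ne_zero 2 (hsin_ne β hβ)
  have hgc : Continuous g := by
    apply Continuous.mul continuous_id
    apply Real.continuous_exp.comp
    fun_prop
  have hkey := intervalIntegral.integral_comp_smul_deriv hderiv hcont hgc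
  have hfa : f (π / 2 - α) = Real.cos α := by
    rw [hf]
    simp only
    rw [show α + (π / 2 - α) = π / 2 by ring, Real.sin_pi_div_two, Real.sin_pi_div_two_sub,
      div_one]
  have hfb : f (π / 2) = (Real.cos α)⁻¹ := by
    rw [hf]
    simp only
    rw [Real.sin_pi_div_two, Real.sin_add_pi_div_two, one_div]
  rw [hfa, hfb] at hkey
  rw [← integral_Ioc_eq_integral_Ioo, ← integral_Ioc_eq_integral_Ioo,
    ← intervalIntegral.integral_of_le hle, ← intervalIntegral.integral_of_le hab.le,
    ← hkey]
  apply intervalIntegral.integral_congr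
  intro β hβ
  have hne := hsin_ne β hβ
  rw [Set.uIcc_of_le hle, Set.mem_Icc] at hβ
  have hs : 0 < Real.sin (α + β) :=
    Real.sin_pos_of_pos_of_lt_pi (by linarith [hβ.1]) (by linarith [hβ.2])
  simp only [hf, hg, smul_eq_mul, Function.comp_apply]
  have hexp : -(π / 4) * (Real.sin (α - β) ^ 2 + 4 * Real.sin α ^ 2 * Real.sin β ^ 2) /
      Real.sin (α + β) ^ 2
      = -π * ((Real.sin β / Real.sin (α + β))^2
          - (Real.sin β / Real.sin (α + β)) * Real.cos α + 1/4) := by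
    have hid : Real.sin (α - β) ^ 2 + 4 * Real.sin α ^ 2 * Real.sin β ^ 2
        = 4 * Real.sin β ^ 2 - 4 * Real.sin β * Real.cos α * Real.sin (α + β)
          + Real.sin (α + β) ^ 2 := by
      rw [Real.sin_sub, Real.sin_add]
      linear_combination (4 * Real.sin β ^ 2) * (Real.sin_sq_add_cos_sq α)
    rw [hid]
    field_simp
  rw [hexp]
  field_simp


theorem anchored_acute_probability :
    2 * ∫ α in Set.Ioo (0:ℝ) (π / 2), ∫ β in Set.Ioo (π / 2 - α) (π / 2),
        Real.exp (-(π / 4) * (Real.sin (α - β) ^ 2 + 4 * Real.sin α ^ 2 * Real.sin β ^ 2) /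
            Real.sin (α + β) ^ 2) *
          (Real.sin α * Real.sin β / Real.sin (α + β) ^ 3) =
      Real.exp (-π / 4) - erfc (Real.sqrt π / 2) := by
  have houter : (∫ α in Set.Ioo (0:ℝ) (π / 2), ∫ β in Set.Ioo (π / 2 - α) (π / 2),
        Real.exp (-(π / 4) * (Real.sin (α - β) ^ 2 + 4 * Real.sin α ^ 2 * Real.sin β ^ 2) /
            Real.sin (α + β) ^ 2) *
          (Real.sin α * Real.sin β / Real.sin (α + β) ^ 3))
      = ∫ p in Sp, phi p := by
    rw [← iterated_eq_Sp]
    apply setIntegral_congr_fun measurableSet_Ioo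
    intro α hα
    exact inner_subst hα
  rw [houter, Sp_val]
  ring
end

section
/- For the transformation u = tan(α)/(tan(α)+tan(β)), v = tan(α)tan(β)/(tan(α)+tan(β)) from (u,v) with v > 0 to angles (α,β) ∈ (0,π)² with α+β < π, the Jacobian determinant of (u,v) ↦ (α,β) equals v/((u²+v²)·((1−u)²+v²)). -/
open Real MeasureTheory

theorem staked_jacobian (u v : ℝ) (hv : 0 < v) (hu0 : 0 < u) (hu1 : u < 1) :
    Matrix.det
      !![deriv (fun t => Real.arctan (v / (1 - t))) u,
         deriv (fun t => Real.arctan (t / (1 - u))) v;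
         deriv (fun t => Real.arctan (v / t)) u,
         deriv (fun t => Real.arctan (t / u)) v] =
      v / ((u ^ 2 + v ^ 2) * ((1 - u) ^ 2 + v ^ 2)) := by
  have h1u : (0:ℝ) < 1 - u := by linarith
  have hne1 : (1 - u) ≠ 0 := ne_of_gt h1u
  have hneu : u ≠ 0 := ne_of_gt hu0
  have hp2 : (0:ℝ) < (1 - u) ^ 2 + v ^ 2 := by positivity
  have hp3 : (0:ℝ) < u ^ 2 + v ^ 2 := by positivity
  have d1 : HasDerivAt (fun t => Real.arctan (v / (1 - t))) (v / ((1 - u) ^ 2 + v ^ 2)) u := by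
    have hf : HasDerivAt (fun t : ℝ => v / (1 - t)) (v / (1 - u) ^ 2) u := by
      have h4 := (((hasDerivAt_id u).const_sub 1).inv hne1).const_mul v
      exact h4.congr_deriv (by simp only [id_eq]; field_simp)
    have := hf.arctan
    convert this using 1
    field_simp
  have d2 : HasDerivAt (fun t => Real.arctan (t / (1 - u))) ((1 - u) / ((1 - u) ^ 2 + v ^ 2)) v := by
    have := ((hasDerivAt_id v).div_const (1 - u)).arctan
    convert this using 1
    · rfl
    simp only [id_eq]; field_simp
  have d3 : HasDerivAt (fun t => Real.arctan (v / t)) (-(v / (u ^ 2 + v ^ 2))) u := by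
    have hf : HasDerivAt (fun t : ℝ => v / t) (-(v / u ^ 2)) u := by
      have h4 := ((hasDerivAt_id u).inv hneu).const_mul v
      exact h4.congr_deriv (by simp only [id_eq]; field_simp)
    have := hf.arctan
    convert this using 1
    field_simp
  have d4 : HasDerivAt (fun t => Real.arctan (t / u)) (u / (u ^ 2 + v ^ 2)) v := by
    have := ((hasDerivAt_id v).div_const u).arctan
    convert this using 1
    · rfl
    simp only [id_eq]; field_simp
  rw [d1.deriv, d2.deriv, d3.deriv, d4.deriv, Matrix.det_fin_two_of]
  field_simp
  ring
end
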